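/- arXiv:1611.06942 — 3 statements merged into one kernel-verified Lean document; each statement's English description precedes it below -/
import Mathlib

section
/- Let X, Z > 0, let 0 < α < 1 < σ, and let F : [0,∞) → ℂ be measurable, locally integrable, and satisfy F(u) = O(e^{−σu}) as u → +∞ (i.e. |F(u)| ≤ C e^{−σu} for some constant C and all sufficiently large u). Then, as ε → 0+, ∫₀^{∞}∫₀^{∞} exp(−ε(X e^{u₁} + Z e^{u₁+u₂})) F(u₂) e^{−α u₁} du₁ du₂ = (1/α) ∫₀^{∞} F(u) du + Γ(−α) ( ∫₀^{∞} (Z e^{u} + X)^{α} F(u) du ) ε^{α} + O(ε). -/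
open MeasureTheory Set Real Filter Topology

lemma img_texp {t : ℝ} (ht : 0 < t) : (fun u => t * Real.exp u) '' Ioi (0:ℝ) = Ioi t := by
  ext v
  constructor
  · rintro ⟨u, hu, rfl⟩
    have h1 : (1:ℝ) < Real.exp u := by
      rw [← Real.exp_zero]; exact Real.exp_lt_exp.mpr hu
    simpa using (mul_lt_mul_of_pos_left h1 ht)
  · intro hv
    have hvt : 1 < v / t := (one_lt_div ht).mpr hv
    refine ⟨Real.log (v / t), Real.log_pos hvt, ?_⟩
    show t * Real.exp (Real.log (v / t)) = v
    rw [Real.exp_log (by positivity : (0:ℝ) < v / t)]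
    field_simp

lemma subst_lemma {α t : ℝ} (ht : 0 < t) :
    ∫ v in Ioi t, Real.exp (-v) * v ^ (-α - 1)
      = t ^ (-α) * ∫ u in Ioi (0:ℝ), Real.exp (-(t * Real.exp u)) * Real.exp (-(α * u)) := by
  rw [← img_texp ht,
    integral_image_eq_integral_abs_deriv_smul measurableSet_Ioi
      (f' := fun u => t * Real.exp u)
      (fun x _ => ((Real.hasDerivAt_exp x).const_mul t).hasDerivWithinAt)
      (fun a _ b _ h => by
        have := mul_left_cancel₀ (ne_of_gt ht) h
        exact Real.exp_injective this),
    ← integral_const_mul]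
  refine setIntegral_congr_fun measurableSet_Ioi (fun u hu => ?_)
  have he : (0:ℝ) < Real.exp u := Real.exp_pos u
  have htu : (0:ℝ) < t * Real.exp u := by positivity
  rw [smul_eq_mul, abs_of_pos htu]
  have h1 : (t * Real.exp u) ^ (-α - 1)
      = t ^ (-α) * Real.exp (-(α * u)) * (t * Real.exp u)⁻¹ := by
    rw [show -α - 1 = -α + (-1) by ring, Real.rpow_add htu, Real.rpow_neg_one,
      Real.mul_rpow ht.le he.le, ← Real.exp_mul]
    ring_nf
  rw [h1]
  field_simp

noncomputable def Err (α t : ℝ) : ℝ :=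
  (Real.exp (-t) - 1)/α + t ^ α / α * ∫ v in Ioc (0:ℝ) t, Real.exp (-v) * v ^ (-α)

lemma meas_aux (r : ℝ) : Measurable (fun v : ℝ => Real.exp (-v) * v ^ r) := by fun_prop

lemma I_tail {t : ℝ} (ht : 0 < t) (r : ℝ) (hr : r ≤ 0) :
    IntegrableOn (fun v => Real.exp (-v) * v ^ r) (Ioi t) := by
  have base : IntegrableOn (fun v : ℝ => Real.exp (-v)) (Ioi t) := by
    simpa using exp_neg_integrableOn_Ioi t zero_lt_one
  refine Integrable.mono' (base.const_mul (t ^ r))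
    ((meas_aux r).aestronglyMeasurable) ?_
  filter_upwards [ae_restrict_mem measurableSet_Ioi] with v hv
  have hv' : t < v := hv
  rw [norm_mul, Real.norm_eq_abs, Real.norm_eq_abs, abs_of_pos (Real.exp_pos _),
    abs_of_nonneg (Real.rpow_nonneg (le_of_lt (ht.trans hv')) r), mul_comm (t ^ r)]
  refine mul_le_mul_of_nonneg_left ?_ (Real.exp_pos _).le
  exact Real.antitoneOn_rpow_Ioi_of_exponent_nonpos hr ht (ht.trans hv') hv'.le

lemma ibp_lemma {α t : ℝ} (hα0 : 0 < α) (ht : 0 < t) :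
    α * ∫ v in Ioi t, Real.exp (-v) * v ^ (-α - 1)
      = Real.exp (-t) * t ^ (-α) - ∫ v in Ioi t, Real.exp (-v) * v ^ (-α) := by
  have hder : ∀ v ∈ Ioi t, HasDerivAt (fun v => -(Real.exp (-v) * v ^ (-α)))
      (Real.exp (-v) * v ^ (-α) + α * (Real.exp (-v) * v ^ (-α - 1))) v := by
    intro v hv
    have hv0 : (0:ℝ) < v := ht.trans hv
    have h1 : HasDerivAt (fun v : ℝ => Real.exp (-v)) (-Real.exp (-v)) v := by
      simpa using ((hasDerivAt_neg v).exp)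
    have h2 : HasDerivAt (fun v : ℝ => v ^ (-α)) (-α * v ^ (-α - 1)) v :=
      Real.hasDerivAt_rpow_const (Or.inl hv0.ne')
    have := (h1.mul h2).neg
    refine this.congr_deriv ?_
    ring
  have hint : IntegrableOn (fun v => Real.exp (-v) * v ^ (-α)
      + α * (Real.exp (-v) * v ^ (-α - 1))) (Ioi t) :=
    (I_tail ht (-α) (by linarith)).add ((I_tail ht (-α - 1) (by linarith)).const_mul α)
  have hlim : Tendsto (fun v => -(Real.exp (-v) * v ^ (-α))) atTop (𝓝 0) := by
    have := (Real.tendsto_exp_neg_atTop_nhds_zero.mul (tendsto_rpow_neg_atTop hα0)).neg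
    simpa using this
  have hcont : ContinuousWithinAt (fun v => -(Real.exp (-v) * v ^ (-α))) (Ici t) t := by
    refine ContinuousAt.continuousWithinAt ?_
    exact (((Real.continuous_exp.comp continuous_neg).continuousAt).mul
      (Real.continuousAt_rpow_const _ _ (Or.inl ht.ne'))).neg
  have key := integral_Ioi_of_hasDerivAt_of_tendsto hcont hder hint hlim
  rw [integral_add (I_tail ht (-α) (by linarith))
      ((I_tail ht (-α - 1) (by linarith)).const_mul α), MeasureTheory.integral_const_mul] at key
  linarith [key]

lemma gamma_split {α t : ℝ} (hα1 : α < 1) (ht : 0 < t) :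
    ∫ v in Ioi t, Real.exp (-v) * v ^ (-α)
      = Real.Gamma (1 - α) - ∫ v in Ioc (0:ℝ) t, Real.exp (-v) * v ^ (-α) := by
  have hI : IntegrableOn (fun v => Real.exp (-v) * v ^ (-α)) (Ioi (0:ℝ)) := by
    have := Real.GammaIntegral_convergent (show (0:ℝ) < 1 - α by linarith)
    simpa using this
  have hG : Real.Gamma (1-α) = ∫ v in Ioi (0:ℝ), Real.exp (-v) * v ^ (-α) := by
    rw [Real.Gamma_eq_integral (show (0:ℝ) < 1 - α by linarith)]
    norm_num
  rw [hG, ← Ioc_union_Ioi_eq_Ioi ht.le,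
    setIntegral_union (Ioc_disjoint_Ioi le_rfl) measurableSet_Ioi
      (hI.mono_set Ioc_subset_Ioi_self) (hI.mono_set (Ioi_subset_Ioi ht.le))]
  ring

lemma G_repr {α t : ℝ} (hα0 : 0 < α) (hα1 : α < 1) (ht : 0 < t) :
    ∫ u in Ioi (0:ℝ), Real.exp (-(t * Real.exp u)) * Real.exp (-(α * u))
      = 1/α + Real.Gamma (-α) * t ^ α + Err α t := by
  have hα : α ≠ 0 := hα0.ne'
  have htα : t ^ α * t ^ (-α) = 1 := by
    rw [← Real.rpow_add ht]; simp
  have h2 := ibp_lemma hα0 ht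
  rw [gamma_split hα1 ht] at h2
  have hγ : Real.Gamma (1 - α) = -α * Real.Gamma (-α) := by
    have := Real.Gamma_add_one (neg_ne_zero.mpr hα0.ne')
    rw [show -α + 1 = 1 - α by ring] at this
    exact this
  rw [hγ] at h2
  have hG : ∫ u in Ioi (0:ℝ), Real.exp (-(t * Real.exp u)) * Real.exp (-(α * u))
      = t ^ α * ∫ v in Ioi t, Real.exp (-v) * v ^ (-α - 1) := by
    rw [subst_lemma ht, ← mul_assoc, htα, one_mul]
  have hI : (∫ v in Ioi t, Real.exp (-v) * v ^ (-α - 1))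
      = (Real.exp (-t) * t ^ (-α) + α * Real.Gamma (-α)
          + ∫ v in Ioc (0:ℝ) t, Real.exp (-v) * v ^ (-α)) / α := by
    field_simp
    linarith [h2]
  rw [hG, hI, Err]
  field_simp
  linear_combination Real.exp (-t) * htα

lemma Err_bound {α t : ℝ} (hα0 : 0 < α) (hα1 : α < 1) (ht : 0 < t) :
    |Err α t| ≤ (1/α + 1/(α*(1-α))) * t := by
  have h1α : (0:ℝ) < 1 - α := by linarith
  rw [Err]
  set S := ∫ v in Ioc (0:ℝ) t, Real.exp (-v) * v ^ (-α) with hSdef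
  have hS0 : 0 ≤ S := setIntegral_nonneg measurableSet_Ioc
    (fun v hv => mul_nonneg (Real.exp_pos _).le (Real.rpow_nonneg hv.1.le _))
  have hrint : IntegrableOn (fun v : ℝ => v ^ (-α)) (Ioc (0:ℝ) t) := by
    have := intervalIntegral.intervalIntegrable_rpow' (show (-1:ℝ) < -α by linarith)
      (a := 0) (b := t)
    rwa [intervalIntegrable_iff_integrableOn_Ioc_of_le ht.le] at this
  have heint : IntegrableOn (fun v => Real.exp (-v) * v ^ (-α)) (Ioc (0:ℝ) t) := by
    have := (Real.GammaIntegral_convergent h1α).mono_set (Ioc_subset_Ioi_self : Ioc (0:ℝ) t ⊆ Ioi 0)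
    simpa using this
  have hSle : S ≤ t ^ (1-α) / (1-α) := by
    have hmono : S ≤ ∫ v in Ioc (0:ℝ) t, v ^ (-α) := by
      refine setIntegral_mono_on heint hrint measurableSet_Ioc (fun v hv => ?_)
      have hv0 : (0:ℝ) < v := hv.1
      nth_rewrite 2 [← one_mul (v ^ (-α))]
      exact mul_le_mul_of_nonneg_right (Real.exp_le_one_iff.mpr (by linarith))
        (Real.rpow_nonneg hv0.le _)
    have hval : ∫ v in Ioc (0:ℝ) t, (v:ℝ) ^ (-α) = t ^ (1-α) / (1-α) := by
      rw [← intervalIntegral.integral_of_le ht.le,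
        integral_rpow (Or.inl (by linarith : (-1:ℝ) < -α)),
        Real.zero_rpow (by linarith : -α + 1 ≠ 0), show -α + 1 = 1 - α by ring]
      ring
    linarith
  have htt : t ^ α * t ^ (1-α) = t := by
    rw [← Real.rpow_add ht, show α + (1-α) = 1 by ring, Real.rpow_one]
  have h2le : t ^ α / α * S ≤ 1/(α*(1-α)) * t := by
    have := mul_le_mul_of_nonneg_left hSle (by positivity : (0:ℝ) ≤ t ^ α / α)
    refine this.trans (le_of_eq ?_)
    rw [div_mul_div_comm, htt]
    ring
  have h1abs : |(Real.exp (-t) - 1)/α| ≤ 1/α * t := by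
    have hexple : Real.exp (-t) ≤ 1 := Real.exp_le_one_iff.mpr (by linarith)
    have hge := Real.add_one_le_exp (-t)
    rw [abs_div, abs_of_pos hα0, abs_of_nonpos (by linarith : Real.exp (-t) - 1 ≤ 0)]
    calc -(Real.exp (-t) - 1)/α ≤ t/α := by gcongr; linarith
      _ = 1/α * t := by ring
  have h2abs : |t ^ α / α * S| ≤ 1/(α*(1-α)) * t := by
    rwa [abs_of_nonneg (by positivity)]
  calc |(Real.exp (-t) - 1)/α + t ^ α / α * S|
      ≤ |(Real.exp (-t) - 1)/α| + |t ^ α / α * S| := abs_add_le _ _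
    _ ≤ 1/α * t + 1/(α*(1-α)) * t := add_le_add h1abs h2abs
    _ = (1/α + 1/(α*(1-α))) * t := by ring

/-- Step 5 of Appendix B: for `X, Z > 0`, `0 < α < 1 < σ` and `F`
measurable, locally integrable with `F(u) = O(e^{−σu})` as `u → +∞`, as `ε → 0+`,
`∫₀^∞∫₀^∞ exp(−ε(Xe^{u₁}+Ze^{u₁+u₂})) F(u₂) e^{−αu₁} du₁ du₂
  = (1/α) ∫₀^∞ F + Γ(−α)(∫₀^∞ (Ze^u+X)^α F(u) du) ε^α + O(ε)`. -/
theorem asympt_exponential_weight (X Z : ℝ) (hX : 0 < X) (hZ : 0 < Z)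
    (α σ : ℝ) (hα0 : 0 < α) (hα1 : α < 1) (hσ : 1 < σ) (F : ℝ → ℂ)
    (hFmeas : Measurable F)
    (hFloc : MeasureTheory.LocallyIntegrableOn F (Set.Ici 0))
    (C₁ u₀ : ℝ) (hF : ∀ u : ℝ, u₀ ≤ u → ‖F u‖ ≤ C₁ * Real.exp (-(σ * u))) :
    ∃ C ε₀ : ℝ, 0 < ε₀ ∧ ∀ ε : ℝ, 0 < ε → ε ≤ ε₀ →
      ‖(∫ u₁ in Set.Ioi (0:ℝ), ∫ u₂ in Set.Ioi (0:ℝ),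
            (Real.exp (-(ε * (X * Real.exp u₁ + Z * Real.exp (u₁ + u₂)))) : ℂ) * F u₂ *
              (Real.exp (-(α * u₁)) : ℂ))
          - ((1 / α : ℝ) : ℂ) * (∫ u in Set.Ioi (0:ℝ), F u)
          - ((Real.Gamma (-α) : ℝ) : ℂ) *
              (∫ u in Set.Ioi (0:ℝ), (((Z * Real.exp u + X) ^ α : ℝ) : ℂ) * F u) *
              ((ε ^ α : ℝ) : ℂ)‖ ≤ C * ε := by
  have h1α : (0:ℝ) < 1 - α := by linarith
  have hσ0 : (0:ℝ) < σ - 1 := by linarith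
  set M : ℝ := max u₀ 0 with hMdef
  have hM0 : (0:ℝ) ≤ M := le_max_right _ _
  have hmeasD : Measurable (fun u : ℝ => Real.exp u * ‖F u‖) :=
    Real.measurable_exp.mul hFmeas.norm
  have hFIcc : IntegrableOn F (Icc 0 M) :=
    hFloc.integrableOn_compact_subset Icc_subset_Ici_self isCompact_Icc
  have hD1 : IntegrableOn (fun u => Real.exp u * ‖F u‖) (Ioc 0 M) := by
    have hb : IntegrableOn (fun u => Real.exp M * ‖F u‖) (Icc 0 M) := hFIcc.norm.const_mul _
    refine Integrable.mono' (hb.mono_set Ioc_subset_Icc_self)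
      hmeasD.aestronglyMeasurable ?_
    filter_upwards [ae_restrict_mem measurableSet_Ioc] with u hu
    have h1 : Real.exp u ≤ Real.exp M := Real.exp_le_exp.mpr hu.2
    rw [Real.norm_eq_abs, abs_of_nonneg (by positivity)]
    exact mul_le_mul_of_nonneg_right h1 (norm_nonneg _)
  have hD2 : IntegrableOn (fun u => Real.exp u * ‖F u‖) (Ioi M) := by
    refine Integrable.mono' ((exp_neg_integrableOn_Ioi M hσ0).const_mul C₁)
      hmeasD.aestronglyMeasurable ?_
    filter_upwards [ae_restrict_mem measurableSet_Ioi] with u hu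
    have hu0 : u₀ ≤ u := le_trans (le_max_left _ _) hu.le
    have hFu := hF u hu0
    rw [Real.norm_eq_abs, abs_of_nonneg (by positivity)]
    calc Real.exp u * ‖F u‖ ≤ Real.exp u * (C₁ * Real.exp (-(σ * u))) :=
          mul_le_mul_of_nonneg_left hFu (Real.exp_pos u).le
      _ = C₁ * Real.exp (-(σ-1) * u) := by
          rw [mul_comm (Real.exp u), mul_assoc, ← Real.exp_add,
            show -(σ * u) + u = -(σ-1) * u by ring]
  have hDint : IntegrableOn (fun u => Real.exp u * ‖F u‖) (Ioi 0) := by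
    rw [← Ioc_union_Ioi_eq_Ioi hM0]
    exact hD1.union hD2
  have hFint : IntegrableOn F (Ioi 0) := by
    refine Integrable.mono' hDint hFmeas.aestronglyMeasurable ?_
    filter_upwards [ae_restrict_mem measurableSet_Ioi] with u hu
    have h1 : (1:ℝ) ≤ Real.exp u := by nlinarith [Real.add_one_le_exp u, (mem_Ioi.mp hu).le]
    nlinarith [norm_nonneg (F u)]
  have hrpow_le : ∀ x : ℝ, 0 ≤ x → x ^ α ≤ 1 + x := by
    intro x hx
    rcases le_total x 1 with h | h
    · have := Real.rpow_le_one hx h hα0.le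
      linarith
    · have h2 := Real.rpow_le_rpow_of_exponent_le h hα1.le
      rw [Real.rpow_one] at h2
      linarith
  have hWmeas : Measurable fun u : ℝ => (((Z * Real.exp u + X) ^ α : ℝ):ℂ) * F u := by
    apply Measurable.mul ?_ hFmeas
    apply Complex.measurable_ofReal.comp
    fun_prop
  have hWα : IntegrableOn (fun u => (((Z * Real.exp u + X) ^ α : ℝ):ℂ) * F u) (Ioi 0) := by
    refine Integrable.mono' (hDint.const_mul (1+Z+X)) hWmeas.aestronglyMeasurable ?_
    filter_upwards [ae_restrict_mem measurableSet_Ioi] with u hu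
    have he1 : (1:ℝ) ≤ Real.exp u := by nlinarith [Real.add_one_le_exp u, (mem_Ioi.mp hu).le]
    have hW0 : (0:ℝ) ≤ Z * Real.exp u + X := by positivity
    rw [norm_mul, Complex.norm_real, Real.norm_eq_abs, abs_of_nonneg (Real.rpow_nonneg hW0 α)]
    calc (Z * Real.exp u + X) ^ α * ‖F u‖ ≤ (1 + (Z * Real.exp u + X)) * ‖F u‖ :=
          mul_le_mul_of_nonneg_right (hrpow_le _ hW0) (norm_nonneg _)
      _ ≤ (1+Z+X) * (Real.exp u * ‖F u‖) := by
            nlinarith [mul_nonneg (mul_nonneg (by linarith : (0:ℝ) ≤ 1 + X)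
              (by linarith : (0:ℝ) ≤ Real.exp u - 1)) (norm_nonneg (F u))]
  set K : ℝ := 1/α + 1/(α*(1-α)) with hKdef
  have hK0 : 0 ≤ K := by positivity
  set D : ℝ := ∫ u in Ioi (0:ℝ), Real.exp u * ‖F u‖ with hDdef
  refine ⟨K * (X+Z) * D, 1, one_pos, fun ε hε hε1 => ?_⟩
  -- joint integrability
  have hexpα : Integrable (fun u : ℝ => Real.exp (-(α * u))) (volume.restrict (Ioi 0)) := by
    have := exp_neg_integrableOn_Ioi 0 hα0
    have h : IntegrableOn (fun u : ℝ => Real.exp (-(α * u))) (Ioi 0) := by simpa [neg_mul] using this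
    exact h
  have hmeasf : Measurable (fun p : ℝ × ℝ =>
      (↑(Real.exp (-(ε * (X + Z * Real.exp p.2) * Real.exp p.1))
        * Real.exp (-(α * p.1))) : ℂ) * F p.2) := by
    apply Measurable.mul ?_ (hFmeas.comp measurable_snd)
    apply Complex.measurable_ofReal.comp
    fun_prop
  have hint : Integrable (Function.uncurry fun u₁ u₂ =>
      (↑(Real.exp (-(ε * (X + Z * Real.exp u₂) * Real.exp u₁))
        * Real.exp (-(α * u₁))) : ℂ) * F u₂)
      ((volume.restrict (Ioi 0)).prod (volume.restrict (Ioi 0))) := by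
    refine Integrable.mono' (hexpα.mul_prod hFint.norm) hmeasf.aestronglyMeasurable ?_
    refine Eventually.of_forall fun p => ?_
    rw [Function.uncurry, norm_mul, Complex.norm_real, Real.norm_eq_abs,
      abs_of_nonneg (by positivity)]
    have he1 : Real.exp (-(ε * (X + Z * Real.exp p.2) * Real.exp p.1)) ≤ 1 :=
      Real.exp_le_one_iff.mpr (neg_nonpos.mpr (by positivity))
    have h2 := Real.exp_pos (-(α * p.1))
    nlinarith [norm_nonneg (F p.2), mul_nonneg (mul_nonneg (by linarith :
      (0:ℝ) ≤ 1 - Real.exp (-(ε * (X + Z * Real.exp p.2) * Real.exp p.1))) h2.le)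
      (norm_nonneg (F p.2))]
  -- inner integral evaluation
  have hinnerval : ∀ u₂ ∈ Ioi (0:ℝ),
      (∫ u₁ in Ioi (0:ℝ), (↑(Real.exp (-(ε * (X + Z * Real.exp u₂) * Real.exp u₁))
          * Real.exp (-(α * u₁))) : ℂ) * F u₂)
        = (↑(1/α + Real.Gamma (-α) * (ε * (X + Z * Real.exp u₂)) ^ α
            + Err α (ε * (X + Z * Real.exp u₂))) : ℂ) * F u₂ := by
    intro u₂ hu₂
    have ht : (0:ℝ) < ε * (X + Z * Real.exp u₂) := by positivity
    rw [integral_mul_const]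
    have hor : (∫ u₁ in Ioi (0:ℝ), (↑(Real.exp (-(ε * (X + Z * Real.exp u₂) * Real.exp u₁))
        * Real.exp (-(α * u₁))) : ℂ))
        = ((∫ u₁ in Ioi (0:ℝ), Real.exp (-(ε * (X + Z * Real.exp u₂) * Real.exp u₁))
          * Real.exp (-(α * u₁)) : ℝ) : ℂ) := integral_ofReal (𝕜 := ℂ)
    rw [hor, G_repr hα0 hα1 ht]
  -- the key identity
  have key : (∫ u₁ in Ioi (0:ℝ), ∫ u₂ in Ioi (0:ℝ),
        (Real.exp (-(ε * (X * Real.exp u₁ + Z * Real.exp (u₁ + u₂)))) : ℂ) * F u₂ *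
          (Real.exp (-(α * u₁)) : ℂ))
      = ∫ u₂ in Ioi (0:ℝ), (↑(1/α + Real.Gamma (-α) * (ε * (X + Z * Real.exp u₂)) ^ α
            + Err α (ε * (X + Z * Real.exp u₂))) : ℂ) * F u₂ := by
    have h1 : (∫ u₁ in Ioi (0:ℝ), ∫ u₂ in Ioi (0:ℝ),
        (Real.exp (-(ε * (X * Real.exp u₁ + Z * Real.exp (u₁ + u₂)))) : ℂ) * F u₂ *
          (Real.exp (-(α * u₁)) : ℂ))
        = ∫ u₁ in Ioi (0:ℝ), ∫ u₂ in Ioi (0:ℝ),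
            (↑(Real.exp (-(ε * (X + Z * Real.exp u₂) * Real.exp u₁))
              * Real.exp (-(α * u₁))) : ℂ) * F u₂ := by
      refine integral_congr_ae (Eventually.of_forall fun u₁ => ?_)
      refine integral_congr_ae (Eventually.of_forall fun u₂ => ?_)
      dsimp only
      rw [Real.exp_add, show -(ε * (X * Real.exp u₁ + Z * (Real.exp u₁ * Real.exp u₂)))
        = -(ε * (X + Z * Real.exp u₂) * Real.exp u₁) by ring]
      push_cast
      ring
    rw [h1, MeasureTheory.integral_integral_swap hint]
    exact setIntegral_congr_fun measurableSet_Ioi hinnerval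
  -- integrability of the inner-evaluated function
  have hinner : Integrable (fun u₂ => (↑(1/α + Real.Gamma (-α) * (ε * (X + Z * Real.exp u₂)) ^ α
        + Err α (ε * (X + Z * Real.exp u₂))) : ℂ) * F u₂) (volume.restrict (Ioi 0)) := by
    have h2 := hint.integral_prod_right
    refine h2.congr ?_
    filter_upwards [ae_restrict_mem measurableSet_Ioi] with u₂ hu₂
    exact hinnerval u₂ hu₂
  -- pointwise decomposition
  have hpt : ∀ u : ℝ, (↑(1/α + Real.Gamma (-α) * (ε * (X + Z * Real.exp u)) ^ α
        + Err α (ε * (X + Z * Real.exp u))) : ℂ) * F u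
      = ((1/α : ℝ) : ℂ) * F u
        + (((Real.Gamma (-α) : ℝ) : ℂ) * ((ε ^ α : ℝ) : ℂ))
            * ((((Z * Real.exp u + X) ^ α : ℝ) : ℂ) * F u)
        + (↑(Err α (ε * (X + Z * Real.exp u))) : ℂ) * F u := by
    intro u
    have hmul : (ε * (X + Z * Real.exp u)) ^ α = ε ^ α * (Z * Real.exp u + X) ^ α := by
      rw [Real.mul_rpow hε.le (by positivity), show X + Z * Real.exp u
        = Z * Real.exp u + X by ring]
    rw [hmul]
    push_cast
    ring
  have hg1 : Integrable (fun u => ((1/α : ℝ) : ℂ) * F u) (volume.restrict (Ioi 0)) :=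
    hFint.const_mul _
  have hg2 : Integrable (fun u => (((Real.Gamma (-α) : ℝ) : ℂ) * ((ε ^ α : ℝ) : ℂ))
      * ((((Z * Real.exp u + X) ^ α : ℝ) : ℂ) * F u)) (volume.restrict (Ioi 0)) :=
    hWα.const_mul _
  have hg3 : Integrable (fun u => (↑(Err α (ε * (X + Z * Real.exp u))) : ℂ) * F u)
      (volume.restrict (Ioi 0)) := by
    have h3 := (hinner.sub hg1).sub hg2
    refine h3.congr (Eventually.of_forall fun u => ?_)
    simp only [Pi.sub_apply]
    rw [hpt u]
    ring
  have hsplit : (∫ u₂ in Ioi (0:ℝ), (↑(1/α + Real.Gamma (-α) * (ε * (X + Z * Real.exp u₂)) ^ α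
        + Err α (ε * (X + Z * Real.exp u₂))) : ℂ) * F u₂)
      = ((1 / α : ℝ) : ℂ) * (∫ u in Ioi (0:ℝ), F u)
        + ((Real.Gamma (-α) : ℝ) : ℂ) *
            (∫ u in Ioi (0:ℝ), (((Z * Real.exp u + X) ^ α : ℝ) : ℂ) * F u) * ((ε ^ α : ℝ) : ℂ)
        + ∫ u in Ioi (0:ℝ), (↑(Err α (ε * (X + Z * Real.exp u))) : ℂ) * F u := by
    have hg12 : Integrable (fun u => ((1/α : ℝ) : ℂ) * F u
        + (((Real.Gamma (-α) : ℝ) : ℂ) * ((ε ^ α : ℝ) : ℂ))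
            * ((((Z * Real.exp u + X) ^ α : ℝ) : ℂ) * F u)) (volume.restrict (Ioi 0)) :=
      hg1.add hg2
    rw [integral_congr_ae (Eventually.of_forall fun u => hpt u),
      integral_add hg12 hg3, integral_add hg1 hg2,
      MeasureTheory.integral_const_mul, MeasureTheory.integral_const_mul]
    ring
  -- error bound
  have hEbound : ‖∫ u in Ioi (0:ℝ), (↑(Err α (ε * (X + Z * Real.exp u))) : ℂ) * F u‖
      ≤ K * (X+Z) * D * ε := by
    have hb : ∀ᵐ u ∂(volume.restrict (Ioi (0:ℝ))),
        ‖(↑(Err α (ε * (X + Z * Real.exp u))) : ℂ) * F u‖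
          ≤ (K * (X+Z) * ε) * (Real.exp u * ‖F u‖) := by
      filter_upwards [ae_restrict_mem measurableSet_Ioi] with u hu
      have he1 : (1:ℝ) ≤ Real.exp u := by nlinarith [Real.add_one_le_exp u, (mem_Ioi.mp hu).le]
      have ht : (0:ℝ) < ε * (X + Z * Real.exp u) := by positivity
      have hEb := Err_bound hα0 hα1 ht
      rw [norm_mul, Complex.norm_real, Real.norm_eq_abs]
      calc |Err α (ε * (X + Z * Real.exp u))| * ‖F u‖
          ≤ (K * (ε * (X + Z * Real.exp u))) * ‖F u‖ :=
            mul_le_mul_of_nonneg_right hEb (norm_nonneg _)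
        _ ≤ (K * (X+Z) * ε) * (Real.exp u * ‖F u‖) := by
            nlinarith [mul_nonneg (mul_nonneg (mul_nonneg hK0 hε.le) (norm_nonneg (F u)))
              (mul_nonneg hX.le (by linarith : (0:ℝ) ≤ Real.exp u - 1))]
    have h4 := norm_integral_le_of_norm_le (hDint.const_mul (K * (X+Z) * ε)) hb
    rw [MeasureTheory.integral_const_mul] at h4
    calc ‖∫ u in Ioi (0:ℝ), (↑(Err α (ε * (X + Z * Real.exp u))) : ℂ) * F u‖
        ≤ K * (X+Z) * ε * D := h4
      _ = K * (X+Z) * D * ε := by ring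
  have hfinal : (∫ u₁ in Ioi (0:ℝ), ∫ u₂ in Ioi (0:ℝ),
        (Real.exp (-(ε * (X * Real.exp u₁ + Z * Real.exp (u₁ + u₂)))) : ℂ) * F u₂ *
          (Real.exp (-(α * u₁)) : ℂ))
      - ((1 / α : ℝ) : ℂ) * (∫ u in Ioi (0:ℝ), F u)
      - ((Real.Gamma (-α) : ℝ) : ℂ) *
          (∫ u in Ioi (0:ℝ), (((Z * Real.exp u + X) ^ α : ℝ) : ℂ) * F u) * ((ε ^ α : ℝ) : ℂ)
      = ∫ u in Ioi (0:ℝ), (↑(Err α (ε * (X + Z * Real.exp u))) : ℂ) * F u := by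
    rw [key, hsplit]
    ring
  rw [hfinal]
  exact hEbound
end

section
/- Let X, Z > 0, c > −1 and d ∈ ℝ. Then ∫₀^{1} (Xt + Z)^{d} t^{c} dt = ((X+Z)^{d}/(1+c)) · ₂F₁(1, −d; c+2; X/(X+Z)). -/
open Filter Set MeasureTheory


/-- The Pochhammer symbol `(q)_k = q(q+1)⋯(q+k−1)`. -/
noncomputable def rpoch (q : ℝ) (k : ℕ) : ℝ := ∏ i ∈ Finset.range k, (q + i)

/-- The Gauss hypergeometric series `₂F₁(a,b;c;x) = ∑_k (a)_k (b)_k / ((c)_k k!) x^k`. -/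
noncomputable def hyp2F1 (a b c x : ℝ) : ℝ :=
  ∑' k : ℕ, rpoch a k * rpoch b k / (rpoch c k * (k.factorial : ℝ)) * x ^ k




lemma rpoch_zero (q : ℝ) : rpoch q 0 = 1 := by simp [rpoch]

lemma rpoch_succ (q : ℝ) (k : ℕ) : rpoch q (k + 1) = rpoch q k * (q + k) := by
  simp [rpoch, Finset.prod_range_succ]

lemma rpoch_succ' (q : ℝ) (k : ℕ) : rpoch q (k + 1) = q * rpoch (q + 1) k := by
  simp only [rpoch, Finset.prod_range_succ']
  rw [mul_comm]
  congr 1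
  · norm_num
  · exact Finset.prod_congr rfl (by intros; push_cast; ring)

lemma rpoch_one_left (k : ℕ) : rpoch 1 k = k.factorial := by
  induction k with
  | zero => simp [rpoch]
  | succ n ih => rw [rpoch_succ, ih, Nat.factorial_succ]; push_cast; ring

lemma rpoch_pos {q : ℝ} (hq : 0 < q) (k : ℕ) : 0 < rpoch q k :=
  Finset.prod_pos fun i _ => by positivity

lemma rpoch_nonneg {q : ℝ} (hq : 0 ≤ q) (k : ℕ) : 0 ≤ rpoch q k :=
  Finset.prod_nonneg fun i _ => by positivity

lemma abs_rpoch_le (q : ℝ) (k : ℕ) : |rpoch q k| ≤ rpoch |q| k := by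
  rw [rpoch, rpoch, Finset.abs_prod]
  exact Finset.prod_le_prod (fun i _ => abs_nonneg _)
    (fun i _ => by
      calc |q + (i:ℝ)| ≤ |q| + |(i:ℝ)| := abs_add_le _ _
        _ = |q| + i := by rw [Nat.abs_cast])

lemma rpoch_le_rpoch {p q : ℝ} (hp : 0 ≤ p) (hpq : p ≤ q) (k : ℕ) :
    rpoch p k ≤ rpoch q k :=
  Finset.prod_le_prod (fun i _ => by positivity) (fun i _ => by linarith)

open Filter in
/-- Summability of `(p)_k/k! * (k+1) * r^k` for `0<p`, `0<r<1`. -/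
lemma summable_rpoch_mul (p r : ℝ) (hp : 0 < p) (hr0 : 0 < r) (hr1 : r < 1) :
    Summable (fun k : ℕ => rpoch p k / k.factorial * (k + 1) * r ^ k) := by
  apply summable_of_ratio_test_tendsto_lt_one hr1
  · filter_upwards with k
    have h1 := rpoch_pos hp k
    have h2 : (0:ℝ) < k.factorial := by positivity
    positivity
  · have key : ∀ k : ℕ, (p + (k:ℝ)) / (k + 1) * ((k + 2) / (k + 1)) * r
        = ‖rpoch p (k+1) / (k+1).factorial * (((k:ℝ)+1) + 1) * r ^ (k+1)‖ /
        ‖rpoch p k / k.factorial * ((k:ℝ) + 1) * r ^ k‖ := by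
      intro k
      have h1 := rpoch_pos hp k
      have h1' := rpoch_pos hp (k+1)
      have h2 : (0:ℝ) < k.factorial := by positivity
      have hfs : ((k+1).factorial : ℝ) = (k+1) * k.factorial := by
        rw [Nat.factorial_succ]; push_cast; ring
      rw [Real.norm_of_nonneg (by positivity), Real.norm_of_nonneg (by positivity),
        rpoch_succ, hfs, pow_succ]
      have hk1 : (0:ℝ) < (k:ℝ) + 1 := by positivity
      field_simp
      ring
    have hz : Tendsto (fun k : ℕ => 1 / ((k:ℝ) + 1)) atTop (nhds 0) :=
      tendsto_one_div_add_atTop_nhds_zero_nat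
    have h1 : Tendsto (fun k : ℕ => (p + k) / ((k:ℝ) + 1)) atTop (nhds 1) := by
      have : (fun k : ℕ => (p + k) / ((k:ℝ) + 1))
          = fun k : ℕ => 1 + (p - 1) * (1 / ((k:ℝ) + 1)) := by
        funext k
        have hk : ((k:ℝ) + 1) ≠ 0 := by positivity
        field_simp
        ring
      rw [this]
      have := (hz.const_mul (p - 1)).const_add 1
      simpa using this
    have h2 : Tendsto (fun k : ℕ => ((k:ℝ) + 2) / ((k:ℝ) + 1)) atTop (nhds 1) := by
      have : (fun k : ℕ => ((k:ℝ) + 2) / ((k:ℝ) + 1))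
          = fun k : ℕ => 1 + 1 * (1 / ((k:ℝ) + 1)) := by
        funext k
        have hk : ((k:ℝ) + 1) ≠ 0 := by positivity
        field_simp
        ring
      rw [this]
      have := (hz.const_mul 1).const_add 1
      simpa using this
    have hlim := (h1.mul h2).mul_const r
    have hlim' : Tendsto (fun k : ℕ => (p + (k:ℝ)) / (k + 1) * (((k:ℝ) + 2) / (k + 1)) * r)
        atTop (nhds r) := by simpa using hlim
    have := hlim'.congr key
    convert this using 2 with k
    push_cast
    ring_nf

lemma summable_rpoch_pow (p r : ℝ) (hp : 0 < p) (hr0 : 0 < r) (hr1 : r < 1) :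
    Summable (fun k : ℕ => rpoch p k / k.factorial * r ^ k) := by
  refine Summable.of_nonneg_of_le (fun k => by
      have := rpoch_pos hp k; have : (0:ℝ) < k.factorial := by positivity
      positivity) (fun k => ?_) (summable_rpoch_mul p r hp hr0 hr1)
  have h1 := rpoch_pos hp k
  have h2 : (0:ℝ) < k.factorial := by positivity
  have h3 : (0:ℝ) < r ^ k := by positivity
  nlinarith [mul_pos (div_pos h1 h2) h3]

lemma rpoch_rec (d : ℝ) (k : ℕ) :
    rpoch (-d) (k + 1) / (k+1).factorial * ((k:ℝ) + 1)
      = rpoch (-d) k / k.factorial * ((k:ℝ) - d) := by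
  have h2 : (0:ℝ) < k.factorial := by positivity
  have hfs : ((k+1).factorial : ℝ) = ((k:ℝ)+1) * k.factorial := by
    rw [Nat.factorial_succ]; push_cast; ring
  rw [rpoch_succ, hfs]
  have hk1 : ((k:ℝ) + 1) ≠ 0 := by positivity
  field_simp
  ring

/-- The generalized binomial series. -/
theorem hasSum_binomial (d : ℝ) {y : ℝ} (hy : |y| < 1) :
    HasSum (fun k : ℕ => rpoch (-d) k / k.factorial * y ^ k) ((1 - y) ^ d) := by
  set r : ℝ := (|y| + 1) / 2 with hr
  have hay : 0 ≤ |y| := abs_nonneg y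
  have hr0 : 0 < r := by positivity
  have hr1 : r < 1 := by rw [hr]; linarith
  have hyr : |y| < r := by rw [hr]; linarith
  set p : ℝ := |d| + 1 with hp
  have hp0 : (0:ℝ) < p := by positivity
  set a : ℕ → ℝ := fun k => rpoch (-d) k / k.factorial with ha
  have habs : ∀ k, |a k| ≤ rpoch p k / k.factorial := by
    intro k
    have h2 : (0:ℝ) < k.factorial := by positivity
    rw [ha, abs_div, abs_of_pos h2]
    have h3 : |rpoch (-d) k| ≤ rpoch p k := by
      refine (abs_rpoch_le _ _).trans ?_
      refine rpoch_le_rpoch (abs_nonneg _) ?_ k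
      rw [abs_neg, hp]; linarith
    gcongr
  -- summability facts
  have hsum_g : ∀ z : ℝ, |z| ≤ r → Summable (fun k => a k * z ^ k) := by
    intro z hz
    refine Summable.of_norm_bounded (summable_rpoch_pow p r hp0 hr0 hr1) (fun k => ?_)
    rw [norm_mul, norm_pow]
    have h1 := rpoch_pos hp0 k
    have h2 : (0:ℝ) < k.factorial := by positivity
    calc ‖a k‖ * ‖z‖ ^ k ≤ (rpoch p k / k.factorial) * r ^ k :=
          mul_le_mul (habs k) (pow_le_pow_left₀ (norm_nonneg z) hz k)
            (by positivity) (by positivity)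
      _ = _ := rfl
  set u : ℕ → ℝ := fun k => rpoch p k / k.factorial * (k + 1) * r ^ k / r with hu
  have hu_sum : Summable u := (summable_rpoch_mul p r hp0 hr0 hr1).div_const r
  have hderiv_bound : ∀ k : ℕ, ∀ z : ℝ, |z| ≤ r →
      ‖a k * ((k:ℝ) * z ^ (k - 1))‖ ≤ u k := by
    intro k z hzr
    have h1 := rpoch_pos hp0 k
    have h2 : (0:ℝ) < k.factorial := by positivity
    rw [norm_mul, norm_mul, norm_pow, Real.norm_natCast]
    rcases Nat.eq_zero_or_pos k with hk | hk
    · subst hk; simp [hu]; positivity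
    · have hk1 : k - 1 + 1 = k := Nat.succ_pred_eq_of_pos hk
      calc ‖a k‖ * ((k:ℝ) * ‖z‖ ^ (k - 1))
          ≤ (rpoch p k / k.factorial) * (((k:ℝ) + 1) * r ^ (k - 1)) := by
            apply mul_le_mul (habs k) ?_ (by positivity) (by positivity)
            apply mul_le_mul (by linarith [Nat.cast_nonneg (α := ℝ) k])
              (pow_le_pow_left₀ (norm_nonneg z) hzr _) (by positivity) (by positivity)
        _ = u k := by
            rw [hu]
            have hrk : r ^ k = r ^ (k - 1) * r := by rw [← pow_succ, hk1]
            field_simp [hrk]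
            rw [hrk]
  -- the sum function and its derivative
  set S : ℝ → ℝ := fun z => ∑' k, a k * z ^ k with hS
  have hg0 : Summable fun k => a k * (0:ℝ) ^ k := hsum_g 0 (by simp [hr0.le])
  have hSderiv : ∀ z ∈ Set.Ioo (-r) r,
      HasDerivAt S (∑' k, a k * ((k:ℝ) * z ^ (k - 1))) z := by
    intro z hz
    exact hasDerivAt_tsum_of_isPreconnected hu_sum isOpen_Ioo
      ((convex_Ioo _ _).isPreconnected)
      (fun k w _ => (hasDerivAt_pow k w).const_mul (a k))
      (fun k w hw => hderiv_bound k w (abs_le.2 ⟨hw.1.le, hw.2.le⟩))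
      (by constructor <;> simp [hr0] : (0:ℝ) ∈ Set.Ioo (-r) r) hg0 hz
  have hsum_deriv : ∀ z : ℝ, |z| ≤ r →
      Summable (fun k => a k * ((k:ℝ) * z ^ (k - 1))) :=
    fun z hz => Summable.of_norm_bounded hu_sum (fun k => hderiv_bound k z hz)
  -- the ODE : (1-z) * S' z = -d * S z
  have hODE : ∀ z : ℝ, |z| ≤ r →
      (1 - z) * (∑' k, a k * ((k:ℝ) * z ^ (k - 1))) = -d * S z := by
    intro z hz
    set T := ∑' k, a k * ((k:ℝ) * z ^ (k - 1)) with hT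
    have hTz := hsum_deriv z hz
    -- T = ∑' k, a (k+1) * ((k+1) * z ^ k)
    have hstep : T = ∑' k, a (k+1) * (((k:ℝ)+1) * z ^ k) := by
      rw [hT, Summable.tsum_eq_zero_add hTz]
      simp only [Nat.cast_zero, zero_mul, mul_zero, zero_add, Nat.succ_sub_one]
      push_cast
      rfl
    -- rewrite via the recurrence
    have hrec : ∀ k : ℕ, a (k+1) * (((k:ℝ)+1) * z ^ k) = a k * (((k:ℝ) - d) * z ^ k) := by
      intro k
      have := rpoch_rec d k
      rw [ha]
      calc rpoch (-d) (k+1) / (k+1).factorial * (((k:ℝ)+1) * z ^ k)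
          = (rpoch (-d) (k+1) / (k+1).factorial * ((k:ℝ)+1)) * z ^ k := by ring
        _ = (rpoch (-d) k / k.factorial * ((k:ℝ) - d)) * z ^ k := by rw [this]
        _ = _ := by ring
    have hsumB : Summable (fun k => a k * (((k:ℝ) - d) * z ^ k)) := by
      refine ((summable_nat_add_iff 1).2 hTz).congr (fun k => ?_)
      have h1 : (k + 1) - 1 = k := rfl
      simp only [h1]
      rw [← hrec k]
      push_cast
      rfl
    have hstepB : T = ∑' k, a k * (((k:ℝ) - d) * z ^ k) := by
      rw [hstep]
      exact tsum_congr hrec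
    -- z * T
    have hsumC : Summable (fun k => a k * ((k:ℝ) * z ^ k)) := by
      refine Summable.of_norm_bounded ((summable_rpoch_mul p r hp0 hr0 hr1)) (fun k => ?_)
      have h1 := rpoch_pos hp0 k
      have h2 : (0:ℝ) < k.factorial := by positivity
      rw [norm_mul, norm_mul, norm_pow, Real.norm_natCast]
      calc ‖a k‖ * ((k:ℝ) * ‖z‖ ^ k)
          ≤ (rpoch p k / k.factorial) * (((k:ℝ)+1) * r ^ k) := by
            apply mul_le_mul (habs k) ?_ (by positivity) (by positivity)
            apply mul_le_mul (by linarith [Nat.cast_nonneg (α := ℝ) k])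
              (pow_le_pow_left₀ (norm_nonneg z) hz _) (by positivity) (by positivity)
        _ = _ := by ring
    have hstepC : z * T = ∑' k, a k * ((k:ℝ) * z ^ k) := by
      have h1 : z * T = ∑' k, z * (a (k+1) * (((k:ℝ)+1) * z ^ k)) := by
        rw [hstep, tsum_mul_left]
      have h2 : ∀ k : ℕ, z * (a (k+1) * (((k:ℝ)+1) * z ^ k))
          = a (k+1) * (((k:ℝ)+1) * z ^ (k+1)) := by
        intro k; rw [pow_succ]; ring
      rw [h1, tsum_congr h2]
      rw [Summable.tsum_eq_zero_add hsumC]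
      simp only [Nat.cast_zero, zero_mul, mul_zero, zero_add]
      apply tsum_congr
      intro k
      push_cast
      rfl
    -- combine
    have hfinal : T - z * T = -d * S z := by
      rw [hstepC, hstepB, hS, ← Summable.tsum_sub hsumB hsumC, ← tsum_mul_left]
      apply tsum_congr
      intro k
      ring
    linarith [hfinal]
  -- h := S * (1-·)^(-d) has zero derivative on Ioo (-r) r
  set h : ℝ → ℝ := fun z => S z * (1 - z) ^ (-d) with hh
  have hhderiv : ∀ z ∈ Set.Ioo (-r) r, HasDerivAt h 0 z := by
    intro z hz
    have h1z : (0:ℝ) < 1 - z := by have := hz.2; linarith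
    have hbase : HasDerivAt (fun w : ℝ => 1 - w) (-1) z := by
      simpa using (hasDerivAt_id z).const_sub 1
    have hd1 : HasDerivAt (fun w : ℝ => (1 - w) ^ (-d))
        ((-1) * (-d) * (1 - z) ^ (-d - 1)) z := hbase.rpow_const (Or.inl h1z.ne')
    have hmul := (hSderiv z hz).mul hd1
    have hode := hODE z (abs_le.2 ⟨hz.1.le, hz.2.le⟩)
    have hsplit : (1 - z) ^ (-d) = (1 - z) * (1 - z) ^ (-d - 1) := by
      nth_rewrite 2 [← Real.rpow_one (1 - z)]
      rw [← Real.rpow_add h1z]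
      norm_num
    refine hmul.congr_deriv ?_
    rw [hsplit]
    linear_combination ((1 - z) ^ (-d - 1)) * hode
  -- h is constant : h y = h 0
  have hyr' : y < r := (abs_lt.1 hyr).2
  have hyr'' : -r < y := (abs_lt.1 hyr).1
  have hconst : h y = h 0 := by
    rcases lt_trichotomy y 0 with hy0 | hy0 | hy0
    · have key := constant_of_has_deriv_right_zero (f := h) (a := y) (b := 0)
        (fun w hw => ((hhderiv w ⟨by linarith [hw.1], by linarith [hw.2]⟩).continuousAt).continuousWithinAt)
        (fun w hw => (hhderiv w ⟨by linarith [hw.1], by linarith [hw.2]⟩).hasDerivWithinAt)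
      exact (key 0 ⟨hy0.le, le_refl 0⟩).symm
    · rw [hy0]
    · have key := constant_of_has_deriv_right_zero (f := h) (a := 0) (b := y)
        (fun w hw => ((hhderiv w ⟨by linarith [hw.1], by linarith [hw.2]⟩).continuousAt).continuousWithinAt)
        (fun w hw => (hhderiv w ⟨by linarith [hw.1], by linarith [hw.2]⟩).hasDerivWithinAt)
      exact key y ⟨hy0.le, le_refl y⟩
  -- h 0 = 1
  have hS0 : S 0 = 1 := by
    rw [hS]
    simp only
    rw [tsum_eq_single 0 (fun k hk => by simp [zero_pow hk])]
    simp [ha, rpoch_zero]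
  have hh0 : h 0 = 1 := by
    rw [hh]; simp only; rw [hS0, sub_zero, Real.one_rpow, mul_one]
  -- conclude
  have h1y : (0:ℝ) < 1 - y := by have := abs_lt.1 hy; linarith
  have hSy : S y = (1 - y) ^ d := by
    have h2 : S y * (1 - y) ^ (-d) = 1 := by have hx := hconst.trans hh0; simpa [hh] using hx
    have h3 : (1 - y) ^ (-d) = ((1 - y) ^ d)⁻¹ := Real.rpow_neg h1y.le d
    have h4 : (1 - y) ^ d ≠ 0 := (Real.rpow_pos_of_pos h1y d).ne'
    rw [h3] at h2
    field_simp at h2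
    exact h2
  have := (hsum_g y hyr.le).hasSum
  rw [show (∑' k, a k * y ^ k) = S y from rfl, hSy] at this
  exact this

/-- Beta integral with natural first exponent. -/
lemma integral_pow_mul_rpow (c : ℝ) (hc : -1 < c) (k : ℕ) :
    ∫ t in (0:ℝ)..1, t ^ k * (1 - t) ^ c = k.factorial / rpoch (c + 1) (k + 1) := by
  have hc1 : (0:ℝ) < c + 1 := by linarith
  have hre : 0 < Complex.re (c + 1 : ℂ) := by
    simp [Complex.add_re, Complex.ofReal_re]; exact hc1
  have hbeta := Complex.betaIntegral_eval_nat_add_one_right hre k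
  rw [← Complex.betaIntegral_symm] at hbeta
  -- betaIntegral (k+1) (c+1) : ∫ t in 0..1, t ^ ((k+1:ℂ)-1) * (1-t) ^ ((c+1:ℂ)-1)
  have heq : Complex.betaIntegral ((k:ℂ) + 1) ((c:ℂ) + 1)
      = ((∫ t in (0:ℝ)..1, t ^ k * (1 - t) ^ c : ℝ) : ℂ) := by
    rw [Complex.betaIntegral, ← intervalIntegral.integral_ofReal]
    apply intervalIntegral.integral_congr
    intro t ht
    rw [uIcc_of_le zero_le_one] at ht
    have ht0 : (0:ℝ) ≤ t := ht.1
    have ht1 : (0:ℝ) ≤ 1 - t := by linarith [ht.2]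
    have e1 : ((k:ℂ) + 1 - 1) = (k:ℂ) := by ring
    have e2 : ((c:ℂ) + 1 - 1) = (c:ℂ) := by ring
    rw [e1, e2]
    push_cast
    rw [Complex.ofReal_cpow ht1]
    rw [Complex.cpow_natCast]
    push_cast
    ring
  rw [heq] at hbeta
  have hprod : (∏ j ∈ Finset.range (k + 1), ((c:ℂ) + 1 + (j:ℂ)))
      = ((rpoch (c + 1) (k + 1) : ℝ) : ℂ) := by
    rw [rpoch]
    push_cast
    apply Finset.prod_congr rfl
    intro j _
    push_cast
    ring
  rw [hprod] at hbeta
  have := hbeta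
  rw [show ((k.factorial : ℂ)) = ((k.factorial : ℝ) : ℂ) by push_cast; rfl] at this
  rw [← Complex.ofReal_div] at this
  exact_mod_cast this


/-- binomial coefficient sequence -/
noncomputable def bc (d : ℝ) (k : ℕ) : ℝ := rpoch (-d) k / k.factorial

lemma bc_abs_le (d : ℝ) (k : ℕ) : |bc d k| ≤ bc (-|d|) k := by
  have h2 : (0:ℝ) < k.factorial := by positivity
  rw [bc, bc, abs_div, abs_of_pos h2, neg_neg]
  have h3 : |rpoch (-d) k| ≤ rpoch |d| k := by
    have := abs_rpoch_le (-d) k; rwa [abs_neg] at this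
  gcongr


/-- Step 6 of Appendix B: for `X, Z > 0`, `c > −1` and `d ∈ ℝ`,
`∫₀^1 (Xt+Z)^d t^c dt = ((X+Z)^d/(1+c)) ₂F₁(1,−d;c+2;X/(X+Z))`. -/
theorem integral_power_hyp2F1 (X Z : ℝ) (hX : 0 < X) (hZ : 0 < Z) (c : ℝ) (hc : -1 < c)
    (d : ℝ) :
    (∫ t in (0:ℝ)..1, (X * t + Z) ^ d * t ^ c)
      = ((X + Z) ^ d / (1 + c)) * hyp2F1 1 (-d) (c + 2) (X / (X + Z)) := by
  have hXZ : (0:ℝ) < X + Z := by linarith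
  set x := X / (X + Z) with hx
  have hx0 : 0 < x := div_pos hX hXZ
  have hx1 : x < 1 := (div_lt_one hXZ).2 (by linarith)
  have hc1 : (0:ℝ) < c + 1 := by linarith
  -- reflection t ↦ 1 - s
  have step1 : (∫ t in (0:ℝ)..1, (X * t + Z) ^ d * t ^ c)
      = ∫ s in (0:ℝ)..1, (X * (1 - s) + Z) ^ d * (1 - s) ^ c := by
    rw [intervalIntegral.integral_comp_sub_left
      (fun t => (X * t + Z) ^ d * t ^ c) 1]
    norm_num
  have hxs : ∀ s : ℝ, s ∈ Set.Ioo (0:ℝ) 1 → 0 < 1 - x * s := by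
    intro s hs
    nlinarith [hs.1, hs.2, hx0, hx1]
  have key : ∀ s ∈ Set.Ioo (0:ℝ) 1, (X * (1 - s) + Z) ^ d * (1 - s) ^ c
      = (X + Z) ^ d * ((1 - x * s) ^ d * (1 - s) ^ c) := by
    intro s hs
    have h1 : X * (1 - s) + Z = (X + Z) * (1 - x * s) := by
      rw [hx]; field_simp; ring
    rw [h1, Real.mul_rpow hXZ.le (hxs s hs).le]
    ring
  rw [step1, intervalIntegral.integral_of_le zero_le_one,
    MeasureTheory.integral_Ioc_eq_integral_Ioo,
    MeasureTheory.setIntegral_congr_fun measurableSet_Ioo key,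
    MeasureTheory.integral_const_mul]
  -- dominated convergence
  have hxsabs : ∀ s : ℝ, s ∈ Set.Ioo (0:ℝ) 1 → |x * s| < 1 := by
    intro s hs
    rw [abs_of_nonneg (by nlinarith [hs.1, hx0.le] : (0:ℝ) ≤ x * s)]
    nlinarith [hs.1, hs.2, hx0, hx1]
  have hDCT : HasSum
      (fun k : ℕ => ∫ s in Set.Ioo (0:ℝ) 1, bc d k * x ^ k * (s ^ k * (1 - s) ^ c))
      (∫ s in Set.Ioo (0:ℝ) 1, (1 - x * s) ^ d * (1 - s) ^ c) := by
    apply MeasureTheory.hasSum_integral_of_dominated_convergence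
      (bound := fun k s => bc (-|d|) k * x ^ k * (s ^ k * (1 - s) ^ c))
    · intro k
      apply ContinuousOn.aestronglyMeasurable ?_ measurableSet_Ioo
      apply continuousOn_const.mul
      apply (continuousOn_pow k).mul
      exact (continuousOn_const.sub continuousOn_id).rpow_const
        (fun s hs => Or.inl (by show (1:ℝ) - s ≠ 0; intro h; nlinarith [hs.2]))
    · intro k
      filter_upwards [MeasureTheory.ae_restrict_mem measurableSet_Ioo] with s hs
      have h0 : (0:ℝ) ≤ s ^ k := pow_nonneg hs.1.le k
      have h1 : (0:ℝ) ≤ (1 - s) ^ c := Real.rpow_nonneg (by linarith [hs.2]) c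
      rw [norm_mul, norm_mul, Real.norm_of_nonneg (by positivity :
          (0:ℝ) ≤ s ^ k * (1 - s) ^ c), norm_pow, Real.norm_of_nonneg hx0.le]
      apply mul_le_mul_of_nonneg_right ?_ (by positivity)
      apply mul_le_mul_of_nonneg_right (bc_abs_le d k) (by positivity)
    · filter_upwards [MeasureTheory.ae_restrict_mem measurableSet_Ioo] with s hs
      have hb := (hasSum_binomial (-|d|) (hxsabs s hs)).mul_right ((1 - s) ^ c)
      rw [neg_neg] at hb
      apply hb.summable.congr
      intro k
      rw [bc]
      rw [mul_pow]
      ring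
    · -- integrability of the bound sum
      have heq : (fun s => ∑' k, bc (-|d|) k * x ^ k * (s ^ k * (1 - s) ^ c))
          =ᵐ[volume.restrict (Set.Ioo (0:ℝ) 1)]
          (fun s => (1 - x * s) ^ (-|d|) * (1 - s) ^ c) := by
        filter_upwards [MeasureTheory.ae_restrict_mem measurableSet_Ioo] with s hs
        have hb := (hasSum_binomial (-|d|) (hxsabs s hs)).mul_right ((1 - s) ^ c)
        rw [neg_neg] at hb
        have : (fun k : ℕ => rpoch |d| k / k.factorial * (x * s) ^ k * (1 - s) ^ c)
            = fun k => bc (-|d|) k * x ^ k * (s ^ k * (1 - s) ^ c) := by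
          funext k; rw [bc, neg_neg, mul_pow]; ring
        rw [this] at hb
        exact hb.tsum_eq
      apply MeasureTheory.Integrable.congr ?_ heq.symm
      -- integrable: (1-x s)^(-|d|) * (1-s)^c ≤ (1-x)^(-|d|) * (1-s)^c
      have hint : MeasureTheory.Integrable
          (fun s : ℝ => (1 - x) ^ (-|d|) * (1 - s) ^ c)
          (volume.restrict (Set.Ioo (0:ℝ) 1)) := by
        apply MeasureTheory.Integrable.const_mul
        have h1 : IntervalIntegrable (fun s : ℝ => (1 - s) ^ c) volume 0 1 := by
          have := (intervalIntegral.intervalIntegrable_rpow' hc (a := 0) (b := 1)).comp_sub_left 1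
          norm_num at this
          exact this.symm
        rw [intervalIntegrable_iff_integrableOn_Ioc_of_le zero_le_one] at h1
        exact h1.mono_set Set.Ioo_subset_Ioc_self
      apply hint.mono'
      · apply ContinuousOn.aestronglyMeasurable ?_ measurableSet_Ioo
        apply ContinuousOn.mul
        · exact (continuousOn_const.sub (continuousOn_id.const_smul x)).rpow_const
            (fun s hs => Or.inl (by
              show (1:ℝ) - x * s ≠ 0
              exact (hxs s hs).ne'))
        · exact (continuousOn_const.sub continuousOn_id).rpow_const
            (fun s hs => Or.inl (by show (1:ℝ) - s ≠ 0; intro h; nlinarith [hs.2]))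
      · filter_upwards [MeasureTheory.ae_restrict_mem measurableSet_Ioo] with s hs
        have h2 : (0:ℝ) < 1 - x * s := hxs s hs
        have h1 : (0:ℝ) ≤ (1 - s) ^ c := Real.rpow_nonneg (by linarith [hs.2]) c
        rw [Real.norm_of_nonneg (by positivity)]
        apply mul_le_mul_of_nonneg_right ?_ h1
        apply Real.rpow_le_rpow_of_nonpos (by linarith) (by nlinarith [hs.2, hx0.le])
          (neg_nonpos.2 (abs_nonneg d))
    · filter_upwards [MeasureTheory.ae_restrict_mem measurableSet_Ioo] with s hs
      have hb := (hasSum_binomial d (hxsabs s hs)).mul_right ((1 - s) ^ c)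
      have : (fun k : ℕ => rpoch (-d) k / k.factorial * (x * s) ^ k * (1 - s) ^ c)
          = fun k => bc d k * x ^ k * (s ^ k * (1 - s) ^ c) := by
        funext k; rw [bc, mul_pow]; ring
      rw [this] at hb
      exact hb
  -- evaluate each integral
  have hInt : ∀ k : ℕ, (∫ s in Set.Ioo (0:ℝ) 1, bc d k * x ^ k * (s ^ k * (1 - s) ^ c))
      = bc d k * x ^ k * ((k.factorial : ℝ) / rpoch (c + 1) (k + 1)) := by
    intro k
    rw [MeasureTheory.integral_const_mul, ← MeasureTheory.integral_Ioc_eq_integral_Ioo,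
      ← intervalIntegral.integral_of_le zero_le_one, integral_pow_mul_rpow c hc k]
  rw [hDCT.tsum_eq.symm]
  rw [tsum_congr hInt]
  -- final algebra
  have hterm : ∀ k : ℕ, bc d k * x ^ k * ((k.factorial : ℝ) / rpoch (c + 1) (k + 1))
      = (1 / (1 + c)) * (rpoch 1 k * rpoch (-d) k / (rpoch (c + 2) k * (k.factorial : ℝ))
        * x ^ k) := by
    intro k
    have h2 : (0:ℝ) < k.factorial := by positivity
    have h3 : (0:ℝ) < rpoch (c + 2) k := rpoch_pos (by linarith) k
    rw [bc, rpoch_succ', rpoch_one_left]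
    have : c + 1 + 1 = c + 2 := by ring
    rw [this]
    have h4 : (1:ℝ) + c ≠ 0 := by intro h; linarith
    field_simp [h2.ne', h3.ne', h4]
    ring
  rw [tsum_congr hterm, tsum_mul_left, hyp2F1]
  field_simp
end

section
/- Let D > 0 and 0 < α < β < 1, and define G₁ : ℂ × (0,∞) → ℂ by G₁(z, w) = ∫₀^{w/2} ₁F₁(−α; 1−β; zt/D) e^{−t} t^{−β} dt. Then for every z ∈ ℂ and every w > 0, G₁ satisfies the differential equation −2 ∂²G₁/∂w∂z (z,w) − (1 − z/D) ∂G₁/∂z (z,w) = (α/D) G₁(z, w), where ∂/∂z denotes the complex derivative in the first variable and ∂/∂w the derivative in the second (real) variable. -/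
/-- The Pochhammer symbol `(q)_k = q(q+1)⋯(q+k−1)` in `ℂ`. -/
noncomputable def cpoch (q : ℂ) (k : ℕ) : ℂ := ∏ i ∈ Finset.range k, (q + i)

/-- The confluent hypergeometric series `₁F₁(a;c;x) = ∑_k (a)_k / ((c)_k k!) x^k`. -/
noncomputable def chyp1F1 (a c x : ℂ) : ℂ :=
  ∑' k : ℕ, cpoch a k / (cpoch c k * (k.factorial : ℂ)) * x ^ k

/-- `G₁(z,w) = ∫₀^{w/2} ₁F₁(−α;1−β;zt/D) e^{−t} t^{−β} dt`. -/
noncomputable def G1 (D α β : ℝ) (z : ℂ) (w : ℝ) : ℂ :=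
  ∫ t in (0:ℝ)..(w / 2),
    chyp1F1 (-(α : ℂ)) ((1 - β : ℝ) : ℂ) (z * (t : ℂ) / (D : ℂ)) *
      (Real.exp (-t) : ℂ) * ((t ^ (-β) : ℝ) : ℂ)

open MeasureTheory intervalIntegral Set

namespace G1Aux

/-! ### Power series layer -/

/-- coefficients of ₁F₁(−α;1−β;·) -/
noncomputable def hcoef (α β : ℝ) (k : ℕ) : ℂ :=
  cpoch (-(α:ℂ)) k / (cpoch ((1 - β : ℝ) : ℂ) k * (k.factorial : ℂ))

noncomputable def pshift (B : ℕ → ℂ) (k : ℕ) : ℂ := ((k+1 : ℕ) : ℂ) * B (k+1)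

noncomputable def psum (B : ℕ → ℂ) (x : ℂ) : ℂ := ∑' k, B k * x ^ k

/-- growth control on coefficients -/
def Good (B : ℕ → ℂ) (C : ℝ) : Prop := ∀ k : ℕ, ((k:ℝ)+1) * ‖B (k+1)‖ ≤ C * ‖B k‖

theorem norm_pshift (B : ℕ → ℂ) (k : ℕ) : ‖G1Aux.pshift B k‖ = ((k:ℝ)+1) * ‖B (k+1)‖ := by
  rw [G1Aux.pshift, norm_mul, Complex.norm_natCast]
  push_cast; ring

theorem Good.pshift {B : ℕ → ℂ} {C : ℝ} (h : Good B C) : Good (G1Aux.pshift B) C := by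
  intro k
  have h1 := h (k+1)
  have hk : (0:ℝ) ≤ (k:ℝ)+1 := by positivity
  rw [norm_pshift, norm_pshift]
  push_cast
  calc ((k:ℝ)+1) * (((k:ℝ)+1+1) * ‖B (k+1+1)‖)
      ≤ ((k:ℝ)+1) * (C * ‖B (k+1)‖) := by
        apply mul_le_mul_of_nonneg_left _ hk
        push_cast at h1 ⊢; linarith
    _ = C * (((k:ℝ)+1) * ‖B (k+1)‖) := by ring

theorem Good.summable_norm {B : ℕ → ℂ} {C : ℝ} (h : Good B C) {r : ℝ} (hr : 0 ≤ r) :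
    Summable (fun k => ‖B k‖ * r ^ k) := by
  obtain ⟨N, hN⟩ := exists_nat_ge (2 * C * r)
  apply summable_of_ratio_norm_eventually_le (r := 1/2) (by norm_num)
  filter_upwards [Filter.eventually_ge_atTop N] with k hk
  have hk1 : (0:ℝ) < (k:ℝ)+1 := by positivity
  have h2 : ‖B (k+1)‖ ≤ C * ‖B k‖ / ((k:ℝ)+1) := by
    rw [le_div_iff₀ hk1]; linarith [h k]
  have hCr : C * r ≤ ((k:ℝ)+1) / 2 := by
    have : (N:ℝ) ≤ (k:ℝ) := by exact_mod_cast hk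
    nlinarith
  have hnn : (0:ℝ) ≤ ‖B k‖ * r ^ k := by positivity
  calc ‖‖B (k+1)‖ * r ^ (k+1)‖ = ‖B (k+1)‖ * r ^ (k+1) := by
        rw [Real.norm_of_nonneg (by positivity)]
    _ = ‖B (k+1)‖ * r * r ^ k := by ring
    _ ≤ (C * ‖B k‖ / ((k:ℝ)+1)) * r * r ^ k := by
        apply mul_le_mul_of_nonneg_right _ (by positivity)
        exact mul_le_mul_of_nonneg_right h2 hr
    _ = (C * r / ((k:ℝ)+1)) * (‖B k‖ * r ^ k) := by ring
    _ ≤ (1/2) * (‖B k‖ * r ^ k) := by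
        apply mul_le_mul_of_nonneg_right _ hnn
        rw [div_le_iff₀ hk1]
        linarith
    _ = 1/2 * ‖‖B k‖ * r ^ k‖ := by rw [Real.norm_of_nonneg hnn]

theorem Good.summable {B : ℕ → ℂ} {C : ℝ} (h : Good B C) (x : ℂ) :
    Summable (fun k => B k * x ^ k) := by
  refine Summable.of_norm ?_
  refine (h.summable_norm (norm_nonneg x)).congr fun k => ?_
  rw [norm_mul, norm_pow]

theorem Good.summable_deriv_norm {B : ℕ → ℂ} {C : ℝ} (h : Good B C) {r : ℝ} (hr : 0 ≤ r) :
    Summable (fun k => ‖B k‖ * ((k:ℝ) * r ^ (k-1))) := by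
  have h1 : Summable (fun k => ‖G1Aux.pshift B k‖ * r ^ k) := h.pshift.summable_norm hr
  refine ((summable_nat_add_iff 1).mp ?_)
  refine h1.congr fun k => ?_
  rw [norm_pshift]
  have : (k + 1 : ℕ) - 1 = k := rfl
  rw [this]
  push_cast
  ring

theorem Good.hasDerivAt_psum {B : ℕ → ℂ} {C : ℝ} (h : Good B C) (x : ℂ) :
    HasDerivAt (psum B) (psum (G1Aux.pshift B) x) x := by
  set R : ℝ := ‖x‖ + 1 with hR
  have hR0 : 0 ≤ R := by positivity
  have hsum_deriv : Summable (fun k => B k * ((k:ℂ) * x ^ (k-1))) := by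
    refine Summable.of_norm ?_
    refine (h.summable_deriv_norm (norm_nonneg x)).congr fun k => ?_
    rw [norm_mul, norm_mul, norm_pow, Complex.norm_natCast]
  have htsum : ∑' k, B k * ((k:ℂ) * x ^ (k-1)) = psum (G1Aux.pshift B) x := by
    rw [Summable.tsum_eq_zero_add hsum_deriv]
    simp only [Nat.cast_zero, zero_mul, mul_zero, zero_add]
    refine tsum_congr fun k => ?_
    rw [G1Aux.pshift]
    have : (k + 1 : ℕ) - 1 = k := rfl
    rw [this]
    push_cast
    ring
  rw [← htsum]
  show HasDerivAt (fun y => ∑' k, B k * y ^ k) _ _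
  refine hasDerivAt_tsum_of_isPreconnected (𝕜 := ℂ) (F := ℂ)
    (g := fun k y => B k * y ^ k) (g' := fun k y => B k * ((k:ℂ) * y ^ (k-1)))
    (u := fun k => ‖B k‖ * ((k:ℝ) * R ^ (k-1))) (y₀ := (0:ℂ))
    (h.summable_deriv_norm hR0)
    (Metric.isOpen_ball (x := (0:ℂ)) (ε := R))
    ((convex_ball (0:ℂ) R).isPreconnected)
    (fun k y _ => ?_) (fun k y hy => ?_) ?_ ?_ ?_
  · exact (hasDerivAt_pow k y).const_mul (B k)
  · rw [norm_mul, norm_mul, norm_pow, Complex.norm_natCast]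
    have hyR : ‖y‖ ≤ R := le_of_lt (by simpa using hy)
    have h1 : ‖y‖ ^ (k-1) ≤ R ^ (k-1) := pow_le_pow_left₀ (norm_nonneg _) hyR _
    exact mul_le_mul_of_nonneg_left (mul_le_mul_of_nonneg_left h1 k.cast_nonneg) (norm_nonneg _)
  · simp [hR, Metric.mem_ball]; positivity
  · exact h.summable 0
  · simp [hR, Metric.mem_ball]

theorem Good.continuous_psum {B : ℕ → ℂ} {C : ℝ} (h : Good B C) : Continuous (psum B) :=
  continuous_iff_continuousAt.mpr fun x => (h.hasDerivAt_psum x).continuousAt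

theorem cpoch_succ (q : ℂ) (k : ℕ) : cpoch q (k+1) = cpoch q k * (q + k) :=
  Finset.prod_range_succ _ _

theorem cpoch_ne_zero {β : ℝ} (hβ : β < 1) (k : ℕ) : cpoch ((1 - β : ℝ) : ℂ) k ≠ 0 := by
  rw [cpoch]
  refine Finset.prod_ne_zero_iff.mpr fun i _ => ?_
  have : (((1 - β : ℝ) : ℂ) + i) = (((1 - β + i : ℝ)) : ℂ) := by push_cast; ring
  rw [this, Ne, Complex.ofReal_eq_zero]
  have : (0:ℝ) ≤ (i:ℝ) := i.cast_nonneg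
  intro hh; linarith

/-- recurrence, general form -/
theorem rec_general (a c : ℂ) (k : ℕ) (hc : cpoch c k ≠ 0) (hck : c + k ≠ 0) :
    ((k:ℂ)+1) * (c + k) * (cpoch a (k+1) / (cpoch c (k+1) * ((k+1).factorial : ℂ)))
      = (a + k) * (cpoch a k / (cpoch c k * (k.factorial : ℂ))) := by
  have hfac : ((k.factorial : ℂ)) ≠ 0 := Nat.cast_ne_zero.mpr k.factorial_ne_zero
  have hk1 : ((k:ℂ)+1) ≠ 0 := Nat.cast_add_one_ne_zero k
  rw [cpoch_succ, cpoch_succ]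
  have hfac1 : (((k+1).factorial : ℕ) : ℂ) = ((k:ℂ)+1) * (k.factorial : ℂ) := by
    rw [Nat.factorial_succ]; push_cast; ring
  rw [hfac1]
  field_simp

theorem ofreal_add_nat_ne_zero {r : ℝ} (hr : 0 < r) (k : ℕ) : ((r : ℂ) + k) ≠ 0 := by
  have : ((r : ℂ) + k) = ((r + k : ℝ) : ℂ) := by push_cast; ring
  rw [this, Ne, Complex.ofReal_eq_zero]
  have : (0:ℝ) ≤ (k:ℝ) := k.cast_nonneg
  intro hh; linarith

/-- recurrence: (k+1)(c+k) A(k+1) = (a+k) A k -/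
theorem hcoef_rec {α β : ℝ} (hβ : β < 1) (k : ℕ) :
    ((k:ℂ)+1) * (((1 - β : ℝ) : ℂ) + k) * hcoef α β (k+1)
      = (-(α:ℂ) + k) * hcoef α β k :=
  rec_general _ _ k (cpoch_ne_zero hβ k) (ofreal_add_nat_ne_zero (by linarith) k)

theorem hcoef_good {α β : ℝ} (hα : 0 < α) (hα1 : α < 1) (hβ0 : 0 < β) (hβ : β < 1) :
    Good (hcoef α β) (1/(1-β)) := by
  intro k
  have hrec := hcoef_rec (α := α) (β := β) hβ k
  have hk0 : (0:ℝ) ≤ (k:ℝ) := k.cast_nonneg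
  have hnorm : (((k:ℝ)+1) * ((1:ℝ) - β + k)) * ‖hcoef α β (k+1)‖
      = |(k:ℝ) - α| * ‖hcoef α β k‖ := by
    have := congrArg norm hrec
    rw [norm_mul, norm_mul, norm_mul] at this
    have e1 : ‖((k:ℂ)+1)‖ = (k:ℝ)+1 := by
      have e : ((k:ℂ)+1) = (((k:ℝ)+1 : ℝ) : ℂ) := by push_cast; ring
      rw [e, Complex.norm_real, Real.norm_of_nonneg (by positivity)]
    have e2 : ‖(((1 - β : ℝ) : ℂ) + k)‖ = (1:ℝ) - β + k := by
      have e : (((1 - β : ℝ) : ℂ) + k) = ((1 - β + k : ℝ) : ℂ) := by push_cast; ring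
      rw [e, Complex.norm_real, Real.norm_of_nonneg (by linarith)]
    have e3 : ‖(-(α:ℂ) + k)‖ = |(k:ℝ) - α| := by
      have e : (-(α:ℂ) + k) = (((k:ℝ) - α : ℝ) : ℂ) := by push_cast; ring
      rw [e, Complex.norm_real, Real.norm_eq_abs]
    rw [e1, e2, e3] at this
    linarith [this]
  have hβk : (0:ℝ) < 1 - β + k := by linarith
  have h1β : (0:ℝ) < 1 - β := by linarith
  have habs : |(k:ℝ) - α| ≤ (k:ℝ) + 1 := by
    rw [abs_le]; constructor <;> linarith
  have h2 : |(k:ℝ) - α| * (1-β) ≤ 1-β+k := by nlinarith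
  rw [div_mul_eq_mul_div, le_div_iff₀ h1β, one_mul]
  have e4 : (((k:ℝ)+1) * ‖hcoef α β (k+1)‖ * (1-β)) * (1-β+k)
      = (|(k:ℝ) - α| * (1-β)) * ‖hcoef α β k‖ := by linear_combination (1-β) * hnorm
  have e5 : (|(k:ℝ) - α| * (1-β)) * ‖hcoef α β k‖ ≤ (1-β+k) * ‖hcoef α β k‖ :=
    mul_le_mul_of_nonneg_right h2 (norm_nonneg _)
  have h3 : (((k:ℝ)+1) * ‖hcoef α β (k+1)‖ * (1-β)) * (1-β+k) ≤ ‖hcoef α β k‖ * (1-β+k) := by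
    rw [e4]; linarith
  exact le_of_mul_le_mul_right h3 hβk

theorem kummer {B : ℕ → ℂ} {C : ℝ} (hg : Good B C) (a c : ℂ)
    (hrec : ∀ k : ℕ, ((k:ℂ)+1) * (c + k) * B (k+1) = (a + k) * B k) (x : ℂ) :
    x * psum (pshift (pshift B)) x + (c - x) * psum (pshift B) x = a * psum B x := by
  have s0 := hg.summable x
  have s1 := hg.pshift.summable x
  have s2 := hg.pshift.pshift.summable x
  set T : ℕ → ℂ := fun k => (k:ℂ) * ((k:ℂ)+1) * B (k+1) * x ^ k with hT
  set U : ℕ → ℂ := fun k => (k:ℂ) * B k * x ^ k with hU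
  have hT1 : ∀ k, x * (pshift (pshift B) k * x ^ k) = T (k+1) := by
    intro k; simp only [hT, pshift]; push_cast; ring
  have hU1 : ∀ k, x * (pshift B k * x ^ k) = U (k+1) := by
    intro k; simp only [hU, pshift]; push_cast; ring
  have sT : Summable T :=
    (summable_nat_add_iff 1).mp ((s2.mul_left x).congr hT1)
  have sU : Summable U :=
    (summable_nat_add_iff 1).mp ((s1.mul_left x).congr hU1)
  have e2 : x * psum (pshift (pshift B)) x = ∑' k, T k := by
    rw [psum, ← tsum_mul_left, tsum_congr hT1, Summable.tsum_eq_zero_add sT]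
    simp [hT]
  have e1 : x * psum (pshift B) x = ∑' k, U k := by
    rw [psum, ← tsum_mul_left, tsum_congr hU1, Summable.tsum_eq_zero_add sU]
    simp [hU]
  have key : x * psum (pshift (pshift B)) x + c * psum (pshift B) x
      = x * psum (pshift B) x + a * psum B x := by
    rw [e2, e1, psum, psum, ← tsum_mul_left, ← tsum_mul_left,
      ← Summable.tsum_add sT (s1.mul_left c), ← Summable.tsum_add sU (s0.mul_left a)]
    refine tsum_congr fun k => ?_
    simp only [hT, hU, pshift]
    push_cast
    linear_combination (x ^ k) * hrec k
  linear_combination key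

/-! ### Integrability helpers -/

/-- integrability of (continuous) * t^γ on [0,b] -/
theorem intInt_mul_rpow {g : ℝ → ℂ} (hg : Continuous g) {b γ : ℝ} (hb : 0 ≤ b) (hγ : -1 < γ) :
    IntervalIntegrable (fun t => g t * ((t ^ γ : ℝ) : ℂ)) volume 0 b := by
  rw [intervalIntegrable_iff_integrableOn_Ioc_of_le hb]
  obtain ⟨M, hM⟩ := isCompact_Icc.exists_bound_of_continuousOn (s := Icc (0:ℝ) b)
    hg.continuousOn
  have hrpow_cont : ContinuousOn (fun t : ℝ => ((t ^ γ : ℝ) : ℂ)) (Ioc (0:ℝ) b) := by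
    intro t ht
    exact (Complex.continuous_ofReal.continuousAt.comp
      (Real.continuousAt_rpow_const t γ (Or.inl (ne_of_gt ht.1)))).continuousWithinAt
  have hmeas : AEStronglyMeasurable (fun t => g t * ((t ^ γ : ℝ) : ℂ))
      (volume.restrict (Ioc (0:ℝ) b)) :=
    ((hg.continuousOn).mul hrpow_cont).aestronglyMeasurable measurableSet_Ioc
  have hint : IntegrableOn (fun t : ℝ => M * t ^ γ) (Ioc (0:ℝ) b) := by
    have := (intervalIntegrable_rpow' (a := 0) (b := b) hγ).const_mul M
    rwa [intervalIntegrable_iff_integrableOn_Ioc_of_le hb] at this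
  refine Integrable.mono' hint hmeas ?_
  rw [ae_restrict_iff' measurableSet_Ioc]
  refine Filter.Eventually.of_forall fun t ht => ?_
  have htp : 0 ≤ t ^ γ := Real.rpow_nonneg ht.1.le γ
  rw [norm_mul, Complex.norm_real, Real.norm_of_nonneg htp]
  exact mul_le_mul_of_nonneg_right (hM t (Ioc_subset_Icc_self ht)) htp

noncomputable def F0 (D α β : ℝ) (z : ℂ) (t : ℝ) : ℂ :=
  psum (hcoef α β) (z * (t:ℂ) / (D:ℂ)) * (Real.exp (-t) : ℂ) * ((t ^ (-β) : ℝ) : ℂ)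

noncomputable def Fd (D α β : ℝ) (z : ℂ) (t : ℝ) : ℂ :=
  psum (pshift (hcoef α β)) (z * (t:ℂ) / (D:ℂ)) * ((t:ℂ)/(D:ℂ)) *
    (Real.exp (-t) : ℂ) * ((t ^ (-β) : ℝ) : ℂ)


section main
variable {D α β : ℝ}


theorem deriv_z_aux (hD : 0 < D) (hα : 0 < α) (hαβ : α < β) (hβ : β < 1) (z : ℂ) (w' : ℝ) (hw' : 0 < w') :
    IntervalIntegrable (Fd D α β z) volume 0 (w'/2) ∧
    HasDerivAt (fun z' : ℂ => ∫ t in (0:ℝ)..(w'/2), F0 D α β z' t)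
      (∫ t in (0:ℝ)..(w'/2), Fd D α β z t) z := by
  have hA : Good (hcoef α β) (1/(1-β)) := hcoef_good hα (lt_trans hαβ hβ) (lt_trans hα hαβ) hβ
  have hpA := hA.pshift
  have hb2 : (0:ℝ) ≤ w'/2 := by linarith
  set R : ℝ := (‖z‖ + 1) * (w'/2) / D with hR
  obtain ⟨K, hK⟩ := (isCompact_closedBall (0:ℂ) R).exists_bound_of_continuousOn
    hpA.continuous_psum.continuousOn
  set K' : ℝ := max K 0 with hK'
  have hK'0 : 0 ≤ K' := le_max_right _ _
  have hKb : ∀ y ∈ Metric.closedBall (0:ℂ) R, ‖psum (pshift (hcoef α β)) y‖ ≤ K' :=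
    fun y hy => le_trans (hK y hy) (le_max_left _ _)
  have huIoc : Set.uIoc (0:ℝ) (w'/2) = Ioc (0:ℝ) (w'/2) := uIoc_of_le hb2
  have key := intervalIntegral.hasDerivAt_integral_of_dominated_loc_of_deriv_le
    (μ := volume) (a := (0:ℝ)) (b := w'/2) (x₀ := z) (s := Metric.ball z 1)
    (F := fun x t => F0 D α β x t) (F' := fun x t => Fd D α β x t)
    (bound := fun t => (K' * (w'/(2*D))) * t ^ (-β))
    (Metric.ball_mem_nhds z one_pos) ?_ ?_ ?_ ?_ ?_ ?_
  · exact ⟨key.1, key.2⟩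
  · -- measurability of F0 x, eventually in x
    refine Filter.Eventually.of_forall fun x => ?_
    rw [huIoc]
    have hg : Continuous fun t : ℝ => psum (hcoef α β) (x * (t:ℂ)/(D:ℂ)) * (Real.exp (-t) : ℂ) := by
      apply Continuous.mul
      · exact hA.continuous_psum.comp (by continuity)
      · exact Complex.continuous_ofReal.comp (Real.continuous_exp.comp continuous_neg)
    have hrpow : ContinuousOn (fun t : ℝ => ((t ^ (-β) : ℝ) : ℂ)) (Ioc (0:ℝ) (w'/2)) := by
      intro t ht
      exact (Complex.continuous_ofReal.continuousAt.comp
        (Real.continuousAt_rpow_const t (-β) (Or.inl (ne_of_gt ht.1)))).continuousWithinAt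
    exact ((hg.continuousOn.mul hrpow).aestronglyMeasurable measurableSet_Ioc)
  · -- integrability of F0 z
    apply intInt_mul_rpow _ hb2 (by linarith)
    apply Continuous.mul
    · exact hA.continuous_psum.comp (by continuity)
    · exact Complex.continuous_ofReal.comp (Real.continuous_exp.comp continuous_neg)
  · -- measurability of Fd z
    rw [huIoc]
    have hg : Continuous fun t : ℝ =>
        psum (pshift (hcoef α β)) (z * (t:ℂ)/(D:ℂ)) * ((t:ℂ)/(D:ℂ)) * (Real.exp (-t) : ℂ) := by
      apply Continuous.mul
      apply Continuous.mul
      · exact hpA.continuous_psum.comp (by continuity)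
      · continuity
      · exact Complex.continuous_ofReal.comp (Real.continuous_exp.comp continuous_neg)
    have hrpow : ContinuousOn (fun t : ℝ => ((t ^ (-β) : ℝ) : ℂ)) (Ioc (0:ℝ) (w'/2)) := by
      intro t ht
      exact (Complex.continuous_ofReal.continuousAt.comp
        (Real.continuousAt_rpow_const t (-β) (Or.inl (ne_of_gt ht.1)))).continuousWithinAt
    exact ((hg.continuousOn.mul hrpow).aestronglyMeasurable measurableSet_Ioc)
  · -- bound
    refine Filter.Eventually.of_forall fun t ht x hx => ?_
    rw [huIoc] at ht
    have ht0 : 0 < t := ht.1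
    have htw : t ≤ w'/2 := ht.2
    have hxz : ‖x‖ ≤ ‖z‖ + 1 := by
      have h1 : ‖x - z‖ < 1 := by simpa [dist_eq_norm] using hx
      calc ‖x‖ = ‖z + (x - z)‖ := by ring_nf
        _ ≤ ‖z‖ + ‖x - z‖ := norm_add_le _ _
        _ ≤ ‖z‖ + 1 := by linarith
    have hmem : z * (t:ℂ)/(D:ℂ) ∈ Metric.closedBall (0:ℂ) R ∧
        x * (t:ℂ)/(D:ℂ) ∈ Metric.closedBall (0:ℂ) R := by
      constructor <;>
      · rw [Metric.mem_closedBall, dist_zero_right]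
        rw [show ∀ y : ℂ, ‖y * (t:ℂ)/(D:ℂ)‖ = ‖y‖ * t / D from fun y => by
          rw [norm_div, norm_mul, Complex.norm_real, Complex.norm_real,
            Real.norm_of_nonneg ht0.le, Real.norm_of_nonneg hD.le], hR]
        gcongr <;> first
          | exact hxz
          | exact le_add_of_nonneg_right zero_le_one
          | linarith [norm_nonneg z]
    have hexp : Real.exp (-t) ≤ 1 := Real.exp_le_one_iff.mpr (by linarith)
    have hnorm : ‖Fd D α β x t‖
        = ‖psum (pshift (hcoef α β)) (x * (t:ℂ)/(D:ℂ))‖ * (t/D) * Real.exp (-t) * t ^ (-β) := by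
      rw [Fd, norm_mul, norm_mul, norm_mul, norm_div, Complex.norm_real, Complex.norm_real,
        Complex.norm_real, Complex.norm_real, Real.norm_of_nonneg ht0.le, Real.norm_of_nonneg hD.le,
        Real.norm_of_nonneg (Real.exp_pos _).le,
        Real.norm_of_nonneg (Real.rpow_nonneg ht0.le _)]
    rw [hnorm]
    have hrp : (0:ℝ) ≤ t ^ (-β) := Real.rpow_nonneg ht0.le _
    calc ‖psum (pshift (hcoef α β)) (x * (t:ℂ)/(D:ℂ))‖ * (t/D) * Real.exp (-t) * t ^ (-β)
        ≤ K' * ((w'/2)/D) * 1 * t ^ (-β) := by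
          gcongr <;> first
            | exact hKb _ hmem.2
            | exact htw
            | positivity
      _ = K' * (w'/(2*D)) * t ^ (-β) := by ring
  · -- bound integrable
    exact (intervalIntegrable_rpow' (by linarith)).const_mul _
  · -- differentiability in x
    refine Filter.Eventually.of_forall fun t ht x hx => ?_
    have hlin : HasDerivAt (fun y : ℂ => y * (t:ℂ) / (D:ℂ)) ((t:ℂ)/(D:ℂ)) x := by
      have h1 : HasDerivAt (fun y : ℂ => y * ((t:ℂ)/(D:ℂ))) ((t:ℂ)/(D:ℂ)) x := by
        simpa using (hasDerivAt_id x).mul_const ((t:ℂ)/(D:ℂ))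
      refine h1.congr_of_eventuallyEq (Filter.Eventually.of_forall fun y => ?_)
      show y * (t:ℂ) / (D:ℂ) = y * ((t:ℂ)/(D:ℂ))
      rw [mul_div_assoc]
    have hcomp := (hA.hasDerivAt_psum (x * (t:ℂ)/(D:ℂ))).comp x hlin
    exact (hcomp.mul_const ((Real.exp (-t) : ℝ) : ℂ)).mul_const (((t ^ (-β) : ℝ) : ℝ) : ℂ)

theorem H_identity (hD : 0 < D) (hα : 0 < α) (hαβ : α < β) (hβ : β < 1) (z : ℂ)
    (w : ℝ) (hw : 0 < w) :
    psum (pshift (hcoef α β)) (z * ((w/2 : ℝ):ℂ)/(D:ℂ)) * (Real.exp (-(w/2)) : ℂ)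
        * (((w/2) ^ ((1:ℝ)-β) : ℝ) : ℂ)
      = -(α:ℂ) * (∫ t in (0:ℝ)..(w/2), F0 D α β z t)
        + (z - (D:ℂ)) * ∫ t in (0:ℝ)..(w/2), Fd D α β z t := by
  have hA : Good (hcoef α β) (1/(1-β)) := hcoef_good hα (lt_trans hαβ hβ) (lt_trans hα hαβ) hβ
  have hpA := hA.pshift
  have hb2 : (0:ℝ) ≤ w/2 := by linarith
  set H : ℝ → ℂ := fun t =>
    psum (pshift (hcoef α β)) (z * (t:ℂ)/(D:ℂ)) * (Real.exp (-t):ℂ) * (((t ^ ((1:ℝ)-β) : ℝ)):ℂ)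
    with hH
  set Hd : ℝ → ℂ := fun t => -(α:ℂ) * F0 D α β z t + (z - (D:ℂ)) * Fd D α β z t with hHd
  -- integrability of pieces
  have hcontg0 : Continuous fun t : ℝ => psum (hcoef α β) (z*(t:ℂ)/(D:ℂ)) * (Real.exp (-t):ℂ) := by
    apply Continuous.mul
    · exact hA.continuous_psum.comp (by continuity)
    · exact Complex.continuous_ofReal.comp (Real.continuous_exp.comp continuous_neg)
  have hcontgd : Continuous fun t : ℝ =>
      psum (pshift (hcoef α β)) (z*(t:ℂ)/(D:ℂ)) * ((t:ℂ)/(D:ℂ)) * (Real.exp (-t):ℂ) := by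
    apply Continuous.mul
    apply Continuous.mul
    · exact hpA.continuous_psum.comp (by continuity)
    · continuity
    · exact Complex.continuous_ofReal.comp (Real.continuous_exp.comp continuous_neg)
  have hintF0 : IntervalIntegrable (F0 D α β z) volume 0 (w/2) :=
    intInt_mul_rpow hcontg0 hb2 (by linarith)
  have hintFd : IntervalIntegrable (Fd D α β z) volume 0 (w/2) :=
    intInt_mul_rpow hcontgd hb2 (by linarith)
  have hintHd : IntervalIntegrable Hd volume 0 (w/2) :=
    (hintF0.const_mul _).add (hintFd.const_mul _)
  -- derivative of H on Ioo
  have hder : ∀ t ∈ Ioo (0:ℝ) (w/2), HasDerivAt H (Hd t) t := by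
    intro t ht
    have ht0 : 0 < t := ht.1
    have h1 : HasDerivAt (fun s : ℝ => psum (pshift (hcoef α β)) (z*(s:ℂ)/(D:ℂ)))
        (psum (pshift (pshift (hcoef α β))) (z*(t:ℂ)/(D:ℂ)) * (z/(D:ℂ))) t := by
      have hin : HasDerivAt (fun y : ℂ => z*y/(D:ℂ)) (z/(D:ℂ)) ((t:ℝ):ℂ) := by
        simpa using ((hasDerivAt_id ((t:ℝ):ℂ)).const_mul z).div_const (D:ℂ)
      exact ((hpA.hasDerivAt_psum (z*(t:ℂ)/(D:ℂ))).comp ((t:ℝ):ℂ) hin).comp_ofReal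
    have h2 : HasDerivAt (fun s : ℝ => ((Real.exp (-s) : ℝ):ℂ)) ((-Real.exp (-t) : ℝ):ℂ) t := by
      have : HasDerivAt (fun s : ℝ => Real.exp (-s)) (-Real.exp (-t)) t := by
        simpa [Function.comp_def] using (Real.hasDerivAt_exp (-t)).comp t ((hasDerivAt_id t).neg)
      exact this.ofReal_comp
    have h3 : HasDerivAt (fun s : ℝ => ((s ^ ((1:ℝ)-β) : ℝ):ℂ))
        ((((1:ℝ)-β) * t ^ ((1:ℝ)-β-1) : ℝ):ℂ) t :=
      (Real.hasDerivAt_rpow_const (Or.inl (ne_of_gt ht0))).ofReal_comp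
    have hprod := (h1.mul h2).mul h3
    convert hprod using 1
    · rfl
    · rfl
    have hk := kummer hA (-(α:ℂ)) ((1 - β : ℝ) : ℂ) (fun k => hcoef_rec hβ k) (z*(t:ℂ)/(D:ℂ))
    have hts : (t:ℝ) ^ ((1:ℝ)-β) = t * t^(-β) := by
      rw [show (1:ℝ)-β = 1 + (-β) by ring, Real.rpow_add ht0, Real.rpow_one]
    have ht1 : ((1:ℝ)-β-1) = -β := by ring
    have hDD : (D:ℂ) * ((D:ℂ))⁻¹ = 1 :=
      mul_inv_cancel₀ (Complex.ofReal_ne_zero.mpr (ne_of_gt hD))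
    simp only [hHd, F0, Fd, hts, ht1, Pi.mul_apply]
    push_cast at hk ⊢
    linear_combination (-(Complex.exp (-(t:ℂ)) * ((t^(-β) : ℝ):ℂ))) * hk
      - ((t:ℂ) * psum (pshift (hcoef α β)) (z*(t:ℂ)/(D:ℂ)) * Complex.exp (-(t:ℂ))
          * ((t^(-β) : ℝ):ℂ)) * hDD
  -- limits at endpoints
  have h0 : Filter.Tendsto H (nhdsWithin 0 (Ioi 0)) (nhds 0) := by
    have hc1 : Filter.Tendsto
        (fun t : ℝ => psum (pshift (hcoef α β)) (z*(t:ℂ)/(D:ℂ)) * (Real.exp (-t):ℂ))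
        (nhds 0) (nhds (psum (pshift (hcoef α β)) (z*((0:ℝ):ℂ)/(D:ℂ)) * (Real.exp (-(0:ℝ)):ℂ))) := by
      apply Continuous.tendsto
      apply Continuous.mul
      · exact hpA.continuous_psum.comp (by continuity)
      · exact Complex.continuous_ofReal.comp (Real.continuous_exp.comp continuous_neg)
    have hc2 : Filter.Tendsto (fun t : ℝ => (((t ^ ((1:ℝ)-β) : ℝ)):ℂ)) (nhds 0) (nhds 0) := by
      have hca : ContinuousAt (fun t : ℝ => t ^ ((1:ℝ)-β)) 0 :=
        Real.continuousAt_rpow_const 0 _ (Or.inr (by linarith))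
      have hval : (0:ℝ) ^ ((1:ℝ)-β) = 0 := Real.zero_rpow (by intro hh; linarith)
      have := (Complex.continuous_ofReal.continuousAt.comp hca).tendsto
      simpa [hval, Function.comp_def] using this
    have := hc1.mul hc2
    rw [mul_zero] at this
    exact this.mono_left nhdsWithin_le_nhds
  have hwb : Filter.Tendsto H (nhdsWithin (w/2) (Iio (w/2))) (nhds (H (w/2))) := by
    have hHcont : Continuous H := by
      apply Continuous.mul
      apply Continuous.mul
      · exact hpA.continuous_psum.comp (by continuity)
      · exact Complex.continuous_ofReal.comp (Real.continuous_exp.comp continuous_neg)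
      · exact Complex.continuous_ofReal.comp (Real.continuous_rpow_const (by linarith))
    exact hHcont.continuousAt.tendsto.mono_left nhdsWithin_le_nhds
  have hFTC := intervalIntegral.integral_eq_sub_of_hasDerivAt_of_tendsto
    (by linarith : (0:ℝ) < w/2) hder hintHd h0 hwb
  have hsplit : (∫ t in (0:ℝ)..(w/2), Hd t)
      = -(α:ℂ) * (∫ t in (0:ℝ)..(w/2), F0 D α β z t)
        + (z - (D:ℂ)) * ∫ t in (0:ℝ)..(w/2), Fd D α β z t := by
    rw [hHd]
    rw [intervalIntegral.integral_add (hintF0.const_mul _) (hintFd.const_mul _),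
      intervalIntegral.integral_const_mul, intervalIntegral.integral_const_mul]
  rw [← hsplit, hFTC, sub_zero, hH]

end main

theorem G1_eq (D α β : ℝ) (z : ℂ) (w : ℝ) :
    G1 D α β z w = ∫ t in (0:ℝ)..(w/2), F0 D α β z t := rfl



end G1Aux

open G1Aux in
/-- for `D > 0`, `0 < α < β < 1`, every `z ∈ ℂ` and every `w > 0`,
`−2 ∂²G₁/∂w∂z − (1 − z/D) ∂G₁/∂z = (α/D) G₁`. -/
theorem G1_eigenvalue_equation (D α β : ℝ) (hD : 0 < D) (hα : 0 < α) (hαβ : α < β)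
    (hβ : β < 1) (z : ℂ) (w : ℝ) (hw : 0 < w) :
    -2 * deriv (fun w' : ℝ => deriv (fun z' : ℂ => G1 D α β z' w') z) w
        - (1 - z / (D : ℂ)) * deriv (fun z' : ℂ => G1 D α β z' w) z
      = ((α / D : ℝ) : ℂ) * G1 D α β z w := by
  have hA : Good (hcoef α β) (1/(1-β)) := hcoef_good hα (lt_trans hαβ hβ) (lt_trans hα hαβ) hβ
  have hpA := hA.pshift
  have hw2 : (0:ℝ) < w/2 := by linarith
  -- the z-derivative
  have hzder : ∀ w' : ℝ, 0 < w' →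
      deriv (fun z' : ℂ => G1 D α β z' w') z = ∫ t in (0:ℝ)..(w'/2), Fd D α β z t := by
    intro w' hw'
    have := (deriv_z_aux hD hα hαβ hβ z w' hw').2
    rw [show (fun z' : ℂ => G1 D α β z' w') = fun z' : ℂ => ∫ t in (0:ℝ)..(w'/2), F0 D α β z' t
      from rfl]
    exact this.deriv
  have hzd : deriv (fun z' : ℂ => G1 D α β z' w) z = ∫ t in (0:ℝ)..(w/2), Fd D α β z t :=
    hzder w hw
  -- the w-derivative via FTC
  have hev : (fun w' : ℝ => deriv (fun z' : ℂ => G1 D α β z' w') z)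
      =ᶠ[nhds w] (fun w' : ℝ => ∫ t in (0:ℝ)..(w'/2), Fd D α β z t) := by
    filter_upwards [Ioi_mem_nhds hw] with w' hw'
    exact hzder w' hw'
  have hcontFd : ContinuousAt (Fd D α β z) (w/2) := by
    have h1 : ContinuousAt (fun t : ℝ =>
        psum (pshift (hcoef α β)) (z * (t:ℂ)/(D:ℂ)) * ((t:ℂ)/(D:ℂ)) * (Real.exp (-t):ℂ)) (w/2) := by
      apply Continuous.continuousAt
      apply Continuous.mul
      apply Continuous.mul
      · exact hpA.continuous_psum.comp (by continuity)
      · continuity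
      · exact Complex.continuous_ofReal.comp (Real.continuous_exp.comp continuous_neg)
    have h2 : ContinuousAt (fun t : ℝ => (((t ^ (-β) : ℝ)):ℂ)) (w/2) :=
      Complex.continuous_ofReal.continuousAt.comp
        (Real.continuousAt_rpow_const _ _ (Or.inl (ne_of_gt hw2)))
    exact h1.mul h2
  have hmeasFd : StronglyMeasurableAtFilter (Fd D α β z) (nhds (w/2)) volume := by
    refine ContinuousAt.stronglyMeasurableAtFilter (s := Ioi (0:ℝ)) isOpen_Ioi ?_ _ hw2
    intro t ht
    have h1 : ContinuousAt (fun t : ℝ =>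
        psum (pshift (hcoef α β)) (z * (t:ℂ)/(D:ℂ)) * ((t:ℂ)/(D:ℂ)) * (Real.exp (-t):ℂ)) t := by
      apply Continuous.continuousAt
      apply Continuous.mul
      apply Continuous.mul
      · exact hpA.continuous_psum.comp (by continuity)
      · continuity
      · exact Complex.continuous_ofReal.comp (Real.continuous_exp.comp continuous_neg)
    have h2 : ContinuousAt (fun t : ℝ => (((t ^ (-β) : ℝ)):ℂ)) t :=
      Complex.continuous_ofReal.continuousAt.comp
        (Real.continuousAt_rpow_const _ _ (Or.inl (ne_of_gt ht)))
    exact h1.mul h2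
  have hFTC : HasDerivAt (fun u : ℝ => ∫ t in (0:ℝ)..u, Fd D α β z t)
      (Fd D α β z (w/2)) (w/2) :=
    intervalIntegral.integral_hasDerivAt_right (deriv_z_aux hD hα hαβ hβ z w hw).1
      hmeasFd hcontFd
  have hhalf : HasDerivAt (fun w' : ℝ => w'/2) (1/2 : ℝ) w := by
    simpa using (hasDerivAt_id w).div_const 2
  have hcomp : HasDerivAt (fun w' : ℝ => ∫ t in (0:ℝ)..(w'/2), Fd D α β z t)
      ((1/2 : ℝ) • Fd D α β z (w/2)) w := hFTC.scomp (h := fun w' : ℝ => w'/2) w hhalf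
  have hwd : deriv (fun w' : ℝ => deriv (fun z' : ℂ => G1 D α β z' w') z) w
      = (1/2 : ℝ) • Fd D α β z (w/2) := by
    rw [hev.deriv_eq]
    exact hcomp.deriv
  -- the H identity, and Fd(w/2) in terms of it
  have hid := H_identity hD hα hαβ hβ z w hw
  have hDne : (D:ℂ) ≠ 0 := Complex.ofReal_ne_zero.mpr (ne_of_gt hD)
  have hDF : (D:ℂ) * Fd D α β z (w/2)
      = -(α:ℂ) * (∫ t in (0:ℝ)..(w/2), F0 D α β z t)
        + (z - (D:ℂ)) * ∫ t in (0:ℝ)..(w/2), Fd D α β z t := by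
    rw [← hid]
    have hts : (w/2) ^ ((1:ℝ)-β) = (w/2) * (w/2)^(-β) := by
      rw [show (1:ℝ)-β = 1 + (-β) by ring, Real.rpow_add hw2, Real.rpow_one]
    rw [Fd, hts]
    have hDD : (D:ℂ) * ((D:ℂ))⁻¹ = 1 := mul_inv_cancel₀ hDne
    push_cast
    linear_combination ((z * ((w:ℂ)/2) / (D:ℂ)) * 0 + ((w:ℂ)/2) *
      psum (pshift (hcoef α β)) (z * ((w:ℂ)/2) / (D:ℂ)) * Complex.exp (-((w:ℂ)/2))
        * (((w/2)^(-β) : ℝ):ℂ)) * hDD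
  -- final algebra
  rw [hwd, hzd, G1_eq]
  rw [Complex.real_smul]
  push_cast
  have hG := hDF
  field_simp
  linear_combination (-1 : ℂ) * hG
end
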